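/- arXiv:2311.00440 — 6 statements merged into one kernel-verified Lean document; each statement's English description precedes it below -/
import Mathlib

section
/- For every integer ℓ ≥ 2 and every real a with -1 ≤ a ≤ 0, one has ℓ·P_ℓ(a) ≤ 1/ℓ; moreover, if ℓ·P_ℓ(a) = 1/ℓ then a = 0. -/
open MeasureTheory ProbabilityTheory Set ENNReal

noncomputable def gm : Measure ℝ := gaussianReal 0 1

instance : IsProbabilityMeasure gm := by unfold gm; infer_instance
instance : NullSingletonClass gm :=
  ⟨fun x => (gaussianReal_absolutelyContinuous 0 one_ne_zero) (measure_singleton x)⟩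

noncomputable def gpi (ℓ : ℕ) : Measure (Fin ℓ → ℝ) := Measure.pi fun _ => gm
instance (ℓ : ℕ) : IsProbabilityMeasure (gpi ℓ) := by unfold gpi; infer_instance

lemma gm_Ioo_pos {u v : ℝ} (huv : u < v) : 0 < gm (Ioo u v) := by
  rw [pos_iff_ne_zero]
  intro h
  have := (gaussianReal_absolutelyContinuous' 0 one_ne_zero) h
  rw [Real.volume_Ioo] at this
  simp only [ENNReal.ofReal_eq_zero] at this
  linarith

lemma gpi_ties {ℓ : ℕ} {i j : Fin ℓ} (hij : j ≠ i) (t : ℝ) :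
    gpi ℓ {x | x j = x i + t} = 0 := by
  classical
  set e := MeasurableEquiv.piEquivPiSubtypeProd (fun _ : Fin ℓ => ℝ) (fun c => c = i) with he
  have hmp := measurePreserving_piEquivPiSubtypeProd (fun _ : Fin ℓ => gm) (fun c => c = i)
  set B : Set (({c : Fin ℓ // c = i} → ℝ) × ({c : Fin ℓ // ¬ c = i} → ℝ)) :=
    {q | q.2 ⟨j, hij⟩ = q.1 ⟨i, rfl⟩ + t} with hBdef
  have hB : MeasurableSet B := by
    have m1 : Measurable fun q : ({c : Fin ℓ // c = i} → ℝ) × ({c : Fin ℓ // ¬ c = i} → ℝ) =>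
        q.2 ⟨j, hij⟩ := (measurable_pi_apply _).comp measurable_snd
    have m2 : Measurable fun q : ({c : Fin ℓ // c = i} → ℝ) × ({c : Fin ℓ // ¬ c = i} → ℝ) =>
        q.1 ⟨i, rfl⟩ + t := by fun_prop
    exact measurableSet_eq_fun m1 m2
  have hpre : {x : Fin ℓ → ℝ | x j = x i + t} = e ⁻¹' B := by
    ext x
    simp [hBdef, he, MeasurableEquiv.piEquivPiSubtypeProd, Equiv.piEquivPiSubtypeProd]
  rw [hpre]
  have h2 := hmp.measure_preimage hB.nullMeasurableSet
  show (Measure.pi fun _ : Fin ℓ => gm) (⇑e ⁻¹' B) = 0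
  rw [he] at *
  rw [h2, Measure.prod_apply hB]
  have : ∀ u, (Measure.pi fun _ : {c : Fin ℓ // ¬ c = i} => gm) (Prod.mk u ⁻¹' B) = 0 := by
    intro u
    have : Prod.mk u ⁻¹' B = {v : {c : Fin ℓ // ¬ c = i} → ℝ | v ⟨j, hij⟩ = u ⟨i, rfl⟩ + t} := rfl
    rw [this]
    exact Measure.pi_hyperplane _ _ _
  simp [this]

lemma gpi_swap_mp {ℓ : ℕ} (σ : Equiv.Perm (Fin ℓ)) :
    MeasurePreserving (fun x : Fin ℓ → ℝ => x ∘ σ) (gpi ℓ) (gpi ℓ) := by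
  have h := measurePreserving_piCongrLeft (fun _ : Fin ℓ => gm) σ.symm
  have heq : (⇑(MeasurableEquiv.piCongrLeft (fun _ : Fin ℓ => ℝ) σ.symm)) =
      (fun x : Fin ℓ → ℝ => x ∘ σ) := by
    funext x
    funext b
    have := MeasurableEquiv.piCongrLeft_apply_apply (β := fun _ : Fin ℓ => ℝ) σ.symm x (σ b)
    simpa using this
  rw [heq] at h
  exact h

def Ej (ℓ : ℕ) (a b : ℝ) (x : Fin ℓ → ℝ) (j : Fin ℓ) : Set (Fin ℓ → ℝ) :=
  {y | ∀ c, a * x c + b * y c ≤ a * x j + b * y j}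

lemma measurableSet_Ej {ℓ : ℕ} (a b : ℝ) (x : Fin ℓ → ℝ) (j : Fin ℓ) :
    MeasurableSet (Ej ℓ a b x j) := by
  have : Ej ℓ a b x j = ⋂ c, {y : Fin ℓ → ℝ | a * x c + b * y c ≤ a * x j + b * y j} := by
    ext y; simp [Ej]
  rw [this]
  refine MeasurableSet.iInter fun c => measurableSet_le ?_ ?_
  · have : Measurable fun y : Fin ℓ → ℝ => b * y c := by fun_prop
    exact this.const_add (a * x c)
  · have : Measurable fun y : Fin ℓ → ℝ => b * y j := by fun_prop
    exact this.const_add (a * x j)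

lemma Qle {ℓ : ℕ} {a : ℝ} (b : ℝ) (ha : a ≤ 0) {x : Fin ℓ → ℝ} {j k : Fin ℓ}
    (hxx : x k ≤ x j) : gpi ℓ (Ej ℓ a b x j) ≤ gpi ℓ (Ej ℓ a b x k) := by
  classical
  set σ := Equiv.swap j k with hσ
  have hσj : σ j = k := Equiv.swap_apply_left j k
  have hσk : σ k = j := Equiv.swap_apply_right j k
  have haj : a * x j ≤ a * x k := mul_le_mul_of_nonpos_left hxx ha
  have hsub : Ej ℓ a b x j ⊆ (fun y : Fin ℓ → ℝ => y ∘ σ) ⁻¹' (Ej ℓ a b x k) := by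
    intro y hy c
    simp only [Function.comp_apply, hσk]
    by_cases hcj : c = j
    · subst hcj
      rw [hσj]
      have h1 := hy k
      linarith
    · by_cases hck : c = k
      · subst hck
        rw [hσk]
      · rw [Equiv.swap_apply_of_ne_of_ne hcj hck]
        linarith [hy c]
  calc gpi ℓ (Ej ℓ a b x j) ≤ gpi ℓ ((fun y : Fin ℓ → ℝ => y ∘ σ) ⁻¹' (Ej ℓ a b x k)) :=
        measure_mono hsub
    _ = gpi ℓ (Ej ℓ a b x k) :=
        (gpi_swap_mp σ).measure_preimage (measurableSet_Ej a b x k).nullMeasurableSet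

lemma sum_Q {ℓ : ℕ} {a b : ℝ} (hb : b ≠ 0) (x : Fin ℓ → ℝ) :
    ∑ j : Fin ℓ, gpi ℓ (Ej ℓ a b x j) ≤ 1 := by
  classical
  have hd : Pairwise (Function.onFun (AEDisjoint (gpi ℓ)) fun j => Ej ℓ a b x j) := by
    intro j k hjk
    refine measure_mono_null ?_ (gpi_ties (i := k) (j := j) hjk ((a * x k - a * x j) / b))
    rintro y ⟨hyj, hyk⟩
    have h1 := hyj k
    have h2 := hyk j
    have : b * y j = b * y k + (a * x k - a * x j) := by linarith
    have : y j = y k + (a * x k - a * x j) / b := by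
      field_simp
      linarith
    exact this
  have hU := measure_iUnion₀ hd (fun j => (measurableSet_Ej a b x j).nullMeasurableSet)
  rw [tsum_fintype] at hU
  rw [← hU]
  exact prob_le_one

def Sj (ℓ : ℕ) (j : Fin ℓ) : Set (Fin ℓ → ℝ) := {x | ∀ c, x c ≤ x j}

lemma measurableSet_Sj {ℓ : ℕ} (j : Fin ℓ) : MeasurableSet (Sj ℓ j) := by
  have : Sj ℓ j = ⋂ c, {x : Fin ℓ → ℝ | x c ≤ x j} := by ext x; simp [Sj]
  rw [this]
  exact MeasurableSet.iInter fun c =>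
    measurableSet_le (measurable_pi_apply c) (measurable_pi_apply j)

lemma gpi_Sj {ℓ : ℕ} (hℓ0 : ℓ ≠ 0) (j : Fin ℓ) : gpi ℓ (Sj ℓ j) = (ℓ : ℝ≥0∞)⁻¹ := by
  classical
  have hNE : Nonempty (Fin ℓ) := ⟨⟨0, Nat.pos_of_ne_zero hℓ0⟩⟩
  -- all Sj have the same measure
  have hsame : ∀ k : Fin ℓ, gpi ℓ (Sj ℓ k) = gpi ℓ (Sj ℓ j) := by
    intro k
    set σ := Equiv.swap j k with hσ
    have hσk : σ k = j := Equiv.swap_apply_right j k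
    have hpre : (fun x : Fin ℓ → ℝ => x ∘ σ) ⁻¹' (Sj ℓ k) = Sj ℓ j := by
      ext x
      simp only [mem_preimage, Sj, mem_setOf_eq, Function.comp_apply, hσk]
      constructor
      · intro h c
        have := h (σ c)
        simpa [hσ] using this
      · intro h c
        exact h (σ c)
    have := (gpi_swap_mp σ).measure_preimage (measurableSet_Sj k).nullMeasurableSet
    rw [hpre] at this
    exact this.symm
  have hd : Pairwise (Function.onFun (AEDisjoint (gpi ℓ)) fun k => Sj ℓ k) := by
    intro c k hck
    refine measure_mono_null ?_ (gpi_ties (i := k) (j := c) hck 0)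
    rintro x ⟨h1, h2⟩
    have := le_antisymm (h1 k) (h2 c)
    simpa using this.symm
  have hunion : (⋃ k, Sj ℓ k) = univ := by
    ext x
    simp only [mem_iUnion, mem_univ, iff_true]
    obtain ⟨k, hk⟩ := Finite.exists_max x
    exact ⟨k, hk⟩
  have hU := measure_iUnion₀ hd (fun k => (measurableSet_Sj k).nullMeasurableSet)
  rw [tsum_fintype, hunion] at hU
  have h1 : (1 : ℝ≥0∞) = (ℓ : ℝ≥0∞) * gpi ℓ (Sj ℓ j) := by
    rw [← measure_univ (μ := gpi ℓ), hU]
    rw [Finset.sum_congr rfl (fun k _ => hsame k), Finset.sum_const, Finset.card_univ,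
      Fintype.card_fin, nsmul_eq_mul]
  have hℓne : (ℓ : ℝ≥0∞) ≠ 0 := Nat.cast_ne_zero.mpr hℓ0
  have hℓnt : (ℓ : ℝ≥0∞) ≠ ⊤ := ENNReal.natCast_ne_top ℓ
  calc gpi ℓ (Sj ℓ j) = (ℓ : ℝ≥0∞)⁻¹ * ((ℓ : ℝ≥0∞) * gpi ℓ (Sj ℓ j)) := by
        rw [← mul_assoc, ENNReal.inv_mul_cancel hℓne hℓnt, one_mul]
    _ = (ℓ : ℝ≥0∞)⁻¹ := by rw [← h1, mul_one]

lemma inv_of_mul_le {ℓ : ℕ} (hℓ0 : ℓ ≠ 0) {q : ℝ≥0∞} (h : (ℓ : ℝ≥0∞) * q ≤ 1) :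
    q ≤ (ℓ : ℝ≥0∞)⁻¹ := by
  have hℓne : (ℓ : ℝ≥0∞) ≠ 0 := Nat.cast_ne_zero.mpr hℓ0
  have hℓnt : (ℓ : ℝ≥0∞) ≠ ⊤ := ENNReal.natCast_ne_top ℓ
  calc q = (ℓ : ℝ≥0∞)⁻¹ * ((ℓ : ℝ≥0∞) * q) := by
        rw [← mul_assoc, ENNReal.inv_mul_cancel hℓne hℓnt, one_mul]
    _ ≤ (ℓ : ℝ≥0∞)⁻¹ * 1 := mul_le_mul_right h _
    _ = (ℓ : ℝ≥0∞)⁻¹ := mul_one _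

lemma Qbound {ℓ : ℕ} (hℓ0 : ℓ ≠ 0) {a b : ℝ} (ha : a ≤ 0) (hb : b ≠ 0) {x : Fin ℓ → ℝ}
    {i0 : Fin ℓ} (hx : x ∈ Sj ℓ i0) : gpi ℓ (Ej ℓ a b x i0) ≤ (ℓ : ℝ≥0∞)⁻¹ := by
  refine inv_of_mul_le hℓ0 ?_
  calc (ℓ : ℝ≥0∞) * gpi ℓ (Ej ℓ a b x i0)
      = ∑ _j : Fin ℓ, gpi ℓ (Ej ℓ a b x i0) := by
        rw [Finset.sum_const, Finset.card_univ, Fintype.card_fin, nsmul_eq_mul]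
    _ ≤ ∑ j : Fin ℓ, gpi ℓ (Ej ℓ a b x j) :=
        Finset.sum_le_sum fun j _ => Qle b ha (hx j)
    _ ≤ 1 := sum_Q hb x

/-- The section formula for the main event. -/
lemma measure_F {ℓ : ℕ} (a b : ℝ) (i0 : Fin ℓ) :
    ((gpi ℓ).prod (gpi ℓ))
      {p : (Fin ℓ → ℝ) × (Fin ℓ → ℝ) | ∀ c, p.1 c ≤ p.1 i0 ∧
        a * p.1 c + b * p.2 c ≤ a * p.1 i0 + b * p.2 i0}
      = ∫⁻ x, (Sj ℓ i0).indicator (fun x => gpi ℓ (Ej ℓ a b x i0)) x ∂(gpi ℓ) := by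
  have hF : MeasurableSet {p : (Fin ℓ → ℝ) × (Fin ℓ → ℝ) | ∀ c, p.1 c ≤ p.1 i0 ∧
      a * p.1 c + b * p.2 c ≤ a * p.1 i0 + b * p.2 i0} := by
    have : {p : (Fin ℓ → ℝ) × (Fin ℓ → ℝ) | ∀ c, p.1 c ≤ p.1 i0 ∧
        a * p.1 c + b * p.2 c ≤ a * p.1 i0 + b * p.2 i0} =
        ⋂ c, ({p : (Fin ℓ → ℝ) × (Fin ℓ → ℝ) | p.1 c ≤ p.1 i0} ∩
          {p : (Fin ℓ → ℝ) × (Fin ℓ → ℝ) |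
            a * p.1 c + b * p.2 c ≤ a * p.1 i0 + b * p.2 i0}) := by
      ext p; simp [forall_and]
    rw [this]
    refine MeasurableSet.iInter fun c => MeasurableSet.inter ?_ ?_
    · exact measurableSet_le (measurable_fst.eval) (measurable_fst.eval)
    · refine measurableSet_le ?_ ?_
      · have m1 : Measurable fun p : (Fin ℓ → ℝ) × (Fin ℓ → ℝ) => a * p.1 c :=
          by fun_prop
        have m2 : Measurable fun p : (Fin ℓ → ℝ) × (Fin ℓ → ℝ) => b * p.2 c :=
          by fun_prop
        exact m1.add m2
      · have m1 : Measurable fun p : (Fin ℓ → ℝ) × (Fin ℓ → ℝ) => a * p.1 i0 :=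
          by fun_prop
        have m2 : Measurable fun p : (Fin ℓ → ℝ) × (Fin ℓ → ℝ) => b * p.2 i0 :=
          by fun_prop
        exact m1.add m2
  rw [Measure.prod_apply hF]
  congr 1
  funext x
  by_cases hx : x ∈ Sj ℓ i0
  · rw [indicator_of_mem hx]
    congr 1
    ext y
    simp only [mem_preimage, mem_setOf_eq, Ej]
    constructor
    · intro h c; exact (h c).2
    · intro h c; exact ⟨hx c, h c⟩
  · rw [indicator_of_notMem hx]
    have : (Prod.mk x ⁻¹' {p : (Fin ℓ → ℝ) × (Fin ℓ → ℝ) | ∀ c, p.1 c ≤ p.1 i0 ∧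
        a * p.1 c + b * p.2 c ≤ a * p.1 i0 + b * p.2 i0}) = ∅ := by
      ext y
      simp only [mem_preimage, mem_setOf_eq, mem_empty_iff_false, iff_false]
      intro h
      exact hx fun c => (h c).1
    rw [this]
    simp

lemma Q_strict {ℓ : ℕ} {a b : ℝ} (ha : a < 0) (hb : 0 < b) {x : Fin ℓ → ℝ}
    {i0 i1 : Fin ℓ} (h01 : i1 ≠ i0) (hx : ∀ c, c ≠ i0 → x c < x i0) :
    ∃ ε : ℝ≥0∞, 0 < ε ∧ ε ≠ ⊤ ∧
      gpi ℓ (Ej ℓ a b x i0) + ε ≤ gpi ℓ (Ej ℓ a b x i1) := by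
  classical
  set σ := Equiv.swap i0 i1 with hσ
  have hσ0 : σ i0 = i1 := Equiv.swap_apply_left i0 i1
  have hσ1 : σ i1 = i0 := Equiv.swap_apply_right i0 i1
  set A := (fun y : Fin ℓ → ℝ => y ∘ σ) ⁻¹' (Ej ℓ a b x i0) with hA
  have hx1 : x i1 < x i0 := hx i1 h01
  have hax : a * x i0 ≤ a * x i1 := mul_le_mul_of_nonpos_left hx1.le ha.le
  -- A ⊆ E i1
  have hAsub : A ⊆ Ej ℓ a b x i1 := by
    intro y hy c
    by_cases hc1 : c = i1
    · subst hc1; exact le_rfl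
    · by_cases hc0 : c = i0
      · subst hc0
        have h1 := hy i1
        simp only [Function.comp_apply, hσ0, hσ1] at h1
        -- h1 : a * x i1 + b * y i0 ≤ a * x i0 + b * y i1
        linarith
      · have h1 := hy c
        simp only [Function.comp_apply, hσ0, hσ, Equiv.swap_apply_left,
          Equiv.swap_apply_of_ne_of_ne hc0 hc1] at h1
        -- h1 : a * x c + b * y c ≤ a * x i0 + b * y i1
        linarith
  -- the extra open box U
  set δ := a * (x i1 - x i0) / b with hδ
  have hδpos : 0 < δ := by
    apply div_pos _ hb
    have : x i1 - x i0 < 0 := by linarith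
    exact mul_pos_of_neg_of_neg ha this
  have hδb : δ * b = a * (x i1 - x i0) := div_mul_cancel₀ _ hb.ne'
  set m : Fin ℓ → ℝ := fun c => a * (x i1 - x c) / b with hm
  have hmb : ∀ c, m c * b = a * (x i1 - x c) := fun c => div_mul_cancel₀ _ hb.ne'
  set B : Fin ℓ → Set ℝ := fun c =>
    if c = i0 then Ioo 0 (δ / 2) else if c = i1 then Ioo 0 (δ / 2)
      else Ioo (m c - 1) (m c) with hB
  set U := univ.pi B with hU
  have hUB : ∀ y ∈ U, y i0 ∈ Ioo 0 (δ/2) ∧ y i1 ∈ Ioo 0 (δ/2) ∧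
      ∀ c, c ≠ i0 → c ≠ i1 → y c ∈ Ioo (m c - 1) (m c) := by
    intro y hy
    refine ⟨?_, ?_, ?_⟩
    · have := hy i0 (mem_univ _); simpa [hB] using this
    · have := hy i1 (mem_univ _); simpa [hB, h01] using this
    · intro c hc0 hc1
      have := hy c (mem_univ _); simpa [hB, hc0, hc1] using this
  have hUsub : U ⊆ Ej ℓ a b x i1 := by
    intro y hy c
    obtain ⟨h0, h1, hrest⟩ := hUB y hy
    by_cases hc1 : c = i1
    · subst hc1; exact le_rfl
    · by_cases hc0 : c = i0
      · subst hc0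
        -- need a * x i0 + b * y i0 ≤ a * x i1 + b * y i1
        obtain ⟨h0a, h0b⟩ := h0
        obtain ⟨h1a, h1b⟩ := h1
        nlinarith [hδb, hb]
      · obtain ⟨hca, hcb⟩ := hrest c hc0 hc1
        obtain ⟨h1a, h1b⟩ := h1
        nlinarith [hmb c, hb]
  have hUA : Disjoint U A := by
    rw [Set.disjoint_left]
    intro y hyU hyA
    obtain ⟨h0, h1, _⟩ := hUB y hyU
    have h2 := hyA i1
    simp only [Function.comp_apply, hσ0, hσ1] at h2
    -- h2 : a * x i1 + b * y i0 ≤ a * x i0 + b * y i1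
    obtain ⟨h0a, h0b⟩ := h0
    obtain ⟨h1a, h1b⟩ := h1
    nlinarith [hδb, hb]
  have hUmeas : MeasurableSet U := by
    refine MeasurableSet.univ_pi fun c => ?_
    by_cases hc0 : c = i0 <;> by_cases hc1 : c = i1 <;> simp [hB, hc0, hc1, measurableSet_Ioo]
  have hUpos : 0 < gpi ℓ U := by
    rw [hU]
    show 0 < Measure.pi (fun _ => gm) (univ.pi B)
    rw [Measure.pi_pi]
    rw [pos_iff_ne_zero]
    rw [Finset.prod_ne_zero_iff]
    intro c _
    refine (pos_iff_ne_zero.mp ?_)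
    by_cases hc0 : c = i0
    · simp only [hB, hc0, if_pos rfl]; exact gm_Ioo_pos (by linarith)
    · by_cases hc1 : c = i1
      · subst hc1
        simp only [hB, if_neg hc0, if_pos rfl]
        exact gm_Ioo_pos (by linarith)
      · simp only [hB, if_neg hc0, if_neg hc1]; exact gm_Ioo_pos (by linarith)
  refine ⟨gpi ℓ U, hUpos, measure_ne_top _ _, ?_⟩
  have hQA : gpi ℓ (Ej ℓ a b x i0) = gpi ℓ A :=
    ((gpi_swap_mp σ).measure_preimage (measurableSet_Ej a b x i0).nullMeasurableSet).symm
  rw [hQA]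
  have : gpi ℓ A + gpi ℓ U = gpi ℓ (A ∪ U) := by
    rw [measure_union hUA.symm hUmeas]
  rw [this]
  exact measure_mono (union_subset hAsub hUsub)

lemma Q_lt {ℓ : ℕ} {a b : ℝ} (ha : a < 0) (hb : 0 < b) {x : Fin ℓ → ℝ}
    {i0 i1 : Fin ℓ} (h01 : i1 ≠ i0) (hx : ∀ c, c ≠ i0 → x c < x i0) :
    gpi ℓ (Ej ℓ a b x i0) < (ℓ : ℝ≥0∞)⁻¹ := by
  classical
  obtain ⟨ε, hε0, hεt, hQ⟩ := Q_strict ha hb h01 hx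
  let Q : Fin ℓ → ℝ≥0∞ := fun j => gpi ℓ (Ej ℓ a b x j)
  show Q i0 < _
  have hQ' : Q i0 + ε ≤ Q i1 := hQ
  have hle : ∀ j : Fin ℓ, Q i0 ≤ Q j := by
    intro j
    by_cases hj : j = i0
    · subst hj; exact le_rfl
    · exact Qle b ha.le (hx j hj).le
  have hkey : (ℓ : ℝ≥0∞) * Q i0 + ε ≤ 1 := by
    have e1 : (ℓ : ℝ≥0∞) * Q i0 + ε = (Q i0 + ε) + ∑ _j ∈ Finset.univ.erase i1, Q i0 := by
      rw [Finset.sum_const]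
      have hcard : (Finset.univ.erase i1).card = ℓ - 1 := by
        rw [Finset.card_erase_of_mem (Finset.mem_univ i1), Finset.card_univ, Fintype.card_fin]
      rw [hcard, nsmul_eq_mul]
      have hℓ1 : 1 ≤ ℓ := Nat.one_le_iff_ne_zero.mpr (by
        rintro rfl; exact absurd i0.2 (by simp))
      have : ((ℓ - 1 : ℕ) : ℝ≥0∞) + 1 = (ℓ : ℝ≥0∞) := by
        exact_mod_cast congrArg (Nat.cast : ℕ → ℝ≥0∞) (Nat.sub_add_cancel hℓ1)
      calc (ℓ : ℝ≥0∞) * Q i0 + ε = (((ℓ - 1 : ℕ) : ℝ≥0∞) + 1) * Q i0 + ε := by rw [this]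
        _ = (Q i0 + ε) + ((ℓ - 1 : ℕ) : ℝ≥0∞) * Q i0 := by ring
    rw [e1]
    calc (Q i0 + ε) + ∑ _j ∈ Finset.univ.erase i1, Q i0
        ≤ Q i1 + ∑ j ∈ Finset.univ.erase i1, Q j :=
          add_le_add hQ' (Finset.sum_le_sum fun j _ => hle j)
      _ = ∑ j : Fin ℓ, Q j := Finset.add_sum_erase _ Q (Finset.mem_univ i1)
      _ ≤ 1 := sum_Q hb.ne' x
  have h2 : (ℓ : ℝ≥0∞) * Q i0 < 1 := by
    refine lt_of_lt_of_le ?_ hkey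
    exact ENNReal.lt_add_right (ENNReal.mul_ne_top (ENNReal.natCast_ne_top ℓ)
      (measure_ne_top _ _)) hε0.ne'
  have hℓ0 : ℓ ≠ 0 := by rintro rfl; exact absurd i0.2 (by simp)
  have hℓne : (ℓ : ℝ≥0∞) ≠ 0 := Nat.cast_ne_zero.mpr hℓ0
  have hℓnt : (ℓ : ℝ≥0∞) ≠ ⊤ := ENNReal.natCast_ne_top ℓ
  calc Q i0 = (ℓ : ℝ≥0∞)⁻¹ * ((ℓ : ℝ≥0∞) * Q i0) := by
        rw [← mul_assoc, ENNReal.inv_mul_cancel hℓne hℓnt, one_mul]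
    _ < (ℓ : ℝ≥0∞)⁻¹ * 1 := by
        rw [ENNReal.mul_lt_mul_iff_right (ENNReal.inv_ne_zero.mpr hℓnt) (ENNReal.inv_ne_top.mpr hℓne)]
        exact h2
    _ = (ℓ : ℝ≥0∞)⁻¹ := mul_one _

lemma Q_measurable {ℓ : ℕ} (a b : ℝ) (i0 : Fin ℓ) :
    Measurable fun x => gpi ℓ (Ej ℓ a b x i0) := by
  have hG : MeasurableSet {p : (Fin ℓ → ℝ) × (Fin ℓ → ℝ) |
      ∀ c, a * p.1 c + b * p.2 c ≤ a * p.1 i0 + b * p.2 i0} := by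
    have : {p : (Fin ℓ → ℝ) × (Fin ℓ → ℝ) |
        ∀ c, a * p.1 c + b * p.2 c ≤ a * p.1 i0 + b * p.2 i0} =
        ⋂ c, {p : (Fin ℓ → ℝ) × (Fin ℓ → ℝ) |
          a * p.1 c + b * p.2 c ≤ a * p.1 i0 + b * p.2 i0} := by
      ext p; simp
    rw [this]
    refine MeasurableSet.iInter fun c => measurableSet_le ?_ ?_
    · have m1 : Measurable fun p : (Fin ℓ → ℝ) × (Fin ℓ → ℝ) => a * p.1 c :=
        by fun_prop
      have m2 : Measurable fun p : (Fin ℓ → ℝ) × (Fin ℓ → ℝ) => b * p.2 c :=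
        by fun_prop
      exact m1.add m2
    · have m1 : Measurable fun p : (Fin ℓ → ℝ) × (Fin ℓ → ℝ) => a * p.1 i0 :=
        by fun_prop
      have m2 : Measurable fun p : (Fin ℓ → ℝ) × (Fin ℓ → ℝ) => b * p.2 i0 :=
        by fun_prop
      exact m1.add m2
  exact measurable_measure_prodMk_left hG

lemma lintegral_le {ℓ : ℕ} (hℓ0 : ℓ ≠ 0) {a b : ℝ} (ha : a ≤ 0) (hb : b ≠ 0) (i0 : Fin ℓ) :
    ∫⁻ x, (Sj ℓ i0).indicator (fun x => gpi ℓ (Ej ℓ a b x i0)) x ∂(gpi ℓ)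
      ≤ (ℓ : ℝ≥0∞)⁻¹ * (ℓ : ℝ≥0∞)⁻¹ := by
  calc ∫⁻ x, (Sj ℓ i0).indicator (fun x => gpi ℓ (Ej ℓ a b x i0)) x ∂(gpi ℓ)
      ≤ ∫⁻ x, (Sj ℓ i0).indicator (fun _ => (ℓ : ℝ≥0∞)⁻¹) x ∂(gpi ℓ) := by
        refine lintegral_mono fun x => ?_
        by_cases hx : x ∈ Sj ℓ i0
        · rw [indicator_of_mem hx, indicator_of_mem hx]
          exact Qbound hℓ0 ha hb hx
        · rw [indicator_of_notMem hx, indicator_of_notMem hx]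
    _ = (ℓ : ℝ≥0∞)⁻¹ * gpi ℓ (Sj ℓ i0) := lintegral_indicator_const (measurableSet_Sj i0) _
    _ = (ℓ : ℝ≥0∞)⁻¹ * (ℓ : ℝ≥0∞)⁻¹ := by rw [gpi_Sj hℓ0 i0]

lemma lintegral_lt {ℓ : ℕ} (hℓ0 : ℓ ≠ 0) {a b : ℝ} (ha : a < 0) (hb : 0 < b)
    {i0 i1 : Fin ℓ} (h01 : i1 ≠ i0) :
    ∫⁻ x, (Sj ℓ i0).indicator (fun x => gpi ℓ (Ej ℓ a b x i0)) x ∂(gpi ℓ)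
      < (ℓ : ℝ≥0∞)⁻¹ * (ℓ : ℝ≥0∞)⁻¹ := by
  classical
  set S' : Set (Fin ℓ → ℝ) := {x | ∀ c, c ≠ i0 → x c < x i0} with hS'def
  have hS'meas : MeasurableSet S' := by
    have : S' = ⋂ c, {x : Fin ℓ → ℝ | c ≠ i0 → x c < x i0} := by ext x; simp [hS'def]
    rw [this]
    refine MeasurableSet.iInter fun c => ?_
    by_cases hc : c = i0
    · simp [hc]
    · have : {x : Fin ℓ → ℝ | c ≠ i0 → x c < x i0} = {x | x c < x i0} := by
        ext x; simp [hc]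
      rw [this]
      exact measurableSet_lt (measurable_pi_apply c) (measurable_pi_apply i0)
  have hS'S : S' ⊆ Sj ℓ i0 := by
    intro x hx c
    by_cases hc : c = i0
    · subst hc; exact le_rfl
    · exact (hx c hc).le
  have hdiff : gpi ℓ (Sj ℓ i0 \ S') = 0 := by
    refine measure_mono_null ?_
      (measure_iUnion_null fun c => measure_iUnion_null fun hc : c ≠ i0 =>
        gpi_ties hc (0 : ℝ))
    rintro x ⟨hxS, hxn⟩
    simp only [hS'def, mem_setOf_eq, not_forall] at hxn
    obtain ⟨c, hc, h2⟩ := hxn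
    refine mem_iUnion.mpr ⟨c, mem_iUnion.mpr ⟨hc, ?_⟩⟩
    have : x c = x i0 := le_antisymm (hxS c) (not_lt.mp h2)
    simpa using this
  have hS'm : gpi ℓ S' = (ℓ : ℝ≥0∞)⁻¹ := by
    apply le_antisymm
    · rw [← gpi_Sj hℓ0 i0]; exact measure_mono hS'S
    · calc (ℓ : ℝ≥0∞)⁻¹ = gpi ℓ (Sj ℓ i0) := (gpi_Sj hℓ0 i0).symm
        _ ≤ gpi ℓ (Sj ℓ i0 ∩ S') + gpi ℓ (Sj ℓ i0 \ S') := measure_le_inter_add_diff _ _ _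
        _ = gpi ℓ S' := by rw [hdiff, add_zero, inter_eq_self_of_subset_right hS'S]
  have hQmeas : Measurable fun x => gpi ℓ (Ej ℓ a b x i0) := Q_measurable a b i0
  have hae : (fun x => (Sj ℓ i0).indicator (fun x => gpi ℓ (Ej ℓ a b x i0)) x)
      =ᵐ[gpi ℓ] fun x => S'.indicator (fun x => gpi ℓ (Ej ℓ a b x i0)) x := by
    have h0 : ∀ᵐ x ∂(gpi ℓ), x ∉ Sj ℓ i0 \ S' := by
      rw [ae_iff]
      simp only [not_not]; exact hdiff
    filter_upwards [h0] with x hx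
    by_cases h1 : x ∈ S'
    · rw [indicator_of_mem h1, indicator_of_mem (hS'S h1)]
    · have h2 : x ∉ Sj ℓ i0 := fun h => hx ⟨h, h1⟩
      rw [indicator_of_notMem h1, indicator_of_notMem h2]
  rw [lintegral_congr_ae hae]
  have hQlt : ∀ x ∈ S', gpi ℓ (Ej ℓ a b x i0) < (ℓ : ℝ≥0∞)⁻¹ := fun x hx =>
    Q_lt ha hb h01 hx
  set D := ∫⁻ x, S'.indicator (fun x => (ℓ : ℝ≥0∞)⁻¹ - gpi ℓ (Ej ℓ a b x i0)) x ∂(gpi ℓ)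
    with hDdef
  have hsplit : (∫⁻ x, S'.indicator (fun x => gpi ℓ (Ej ℓ a b x i0)) x ∂(gpi ℓ)) + D
      = (ℓ : ℝ≥0∞)⁻¹ * (ℓ : ℝ≥0∞)⁻¹ := by
    rw [hDdef, ← lintegral_add_left (hQmeas.indicator hS'meas)]
    have : ∀ x, (S'.indicator (fun x => gpi ℓ (Ej ℓ a b x i0)) x +
        S'.indicator (fun x => (ℓ : ℝ≥0∞)⁻¹ - gpi ℓ (Ej ℓ a b x i0)) x)
        = S'.indicator (fun _ => (ℓ : ℝ≥0∞)⁻¹) x := by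
      intro x
      by_cases h1 : x ∈ S'
      · rw [indicator_of_mem h1, indicator_of_mem h1, indicator_of_mem h1]
        exact add_tsub_cancel_of_le (hQlt x h1).le
      · rw [indicator_of_notMem h1, indicator_of_notMem h1, indicator_of_notMem h1,
          add_zero]
    rw [lintegral_congr this, lintegral_indicator_const hS'meas, hS'm]
  have hDpos : 0 < D := by
    rw [pos_iff_ne_zero]
    intro hD0
    have hmeas2 : Measurable fun x =>
        S'.indicator (fun x => (ℓ : ℝ≥0∞)⁻¹ - gpi ℓ (Ej ℓ a b x i0)) x :=
      (measurable_const.sub hQmeas).indicator hS'meas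
    rw [hDdef, lintegral_eq_zero_iff hmeas2] at hD0
    have hnull : gpi ℓ {x | S'.indicator
        (fun x => (ℓ : ℝ≥0∞)⁻¹ - gpi ℓ (Ej ℓ a b x i0)) x ≠ 0} = 0 := by
      rw [Filter.EventuallyEq, ae_iff] at hD0
      simpa using hD0
    have hsub : S' ⊆ {x | S'.indicator
        (fun x => (ℓ : ℝ≥0∞)⁻¹ - gpi ℓ (Ej ℓ a b x i0)) x ≠ 0} := by
      intro x hx
      rw [mem_setOf_eq, indicator_of_mem hx]
      exact (tsub_pos_of_lt (hQlt x hx)).ne'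
    have : gpi ℓ S' = 0 := measure_mono_null hsub hnull
    rw [hS'm] at this
    exact (ENNReal.inv_ne_zero.mpr (ENNReal.natCast_ne_top ℓ)) this
  calc (∫⁻ x, S'.indicator (fun x => gpi ℓ (Ej ℓ a b x i0)) x ∂(gpi ℓ))
      < (∫⁻ x, S'.indicator (fun x => gpi ℓ (Ej ℓ a b x i0)) x ∂(gpi ℓ)) + D := by
        refine ENNReal.lt_add_right ?_ hDpos.ne'
        intro htop
        rw [htop] at hsplit
        have : ((ℓ : ℝ≥0∞)⁻¹ * (ℓ : ℝ≥0∞)⁻¹) ≠ ⊤ :=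
          ENNReal.mul_ne_top (ENNReal.inv_ne_top.mpr (Nat.cast_ne_zero.mpr hℓ0))
            (ENNReal.inv_ne_top.mpr (Nat.cast_ne_zero.mpr hℓ0))
        exact this (by rw [← hsplit]; simp)
    _ = (ℓ : ℝ≥0∞)⁻¹ * (ℓ : ℝ≥0∞)⁻¹ := hsplit

/-- `Pl ℓ a`: with `x₁,…,x_ℓ,y₁,…,y_ℓ` i.i.d. standard normals and `b = √(1-a²)`,
the probability that `x₁ ≥ x_c` and `a·x₁ + b·y₁ ≥ a·x_c + b·y_c` for all `c`. -/
noncomputable def Pl (ℓ : ℕ) (a : ℝ) : ℝ :=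
  if h : ℓ = 0 then 0 else
    (((Measure.pi fun _ : Fin ℓ => gaussianReal 0 1).prod
        (Measure.pi fun _ : Fin ℓ => gaussianReal 0 1))
      {p | ∀ c : Fin ℓ,
        p.1 c ≤ p.1 ⟨0, Nat.pos_of_ne_zero h⟩ ∧
        a * p.1 c + Real.sqrt (1 - a ^ 2) * p.2 c ≤
          a * p.1 ⟨0, Nat.pos_of_ne_zero h⟩ +
            Real.sqrt (1 - a ^ 2) * p.2 ⟨0, Nat.pos_of_ne_zero h⟩}).toReal

/-- For -1 ≤ a ≤ 0, N_ℓ(a) = ℓ·P_ℓ(a) ≤ 1/ℓ, with equality only at a = 0. -/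
theorem stmt_3 (ℓ : ℕ) (hℓ : 2 ≤ ℓ) (a : ℝ) (ha0 : -1 ≤ a) (ha1 : a ≤ 0) :
    (ℓ : ℝ) * Pl ℓ a ≤ 1 / (ℓ : ℝ) ∧ ((ℓ : ℝ) * Pl ℓ a = 1 / (ℓ : ℝ) → a = 0) := by
  have hℓ0 : ℓ ≠ 0 := by omega
  have hℓR : (0 : ℝ) < (ℓ : ℝ) := by positivity
  set i0 : Fin ℓ := ⟨0, Nat.pos_of_ne_zero hℓ0⟩ with hi0
  have hi1 : (⟨1, by omega⟩ : Fin ℓ) ≠ i0 := by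
    simp [hi0, Fin.ext_iff]
  set b := Real.sqrt (1 - a ^ 2) with hbdef
  set F : Set ((Fin ℓ → ℝ) × (Fin ℓ → ℝ)) :=
    {p | ∀ c, p.1 c ≤ p.1 i0 ∧ a * p.1 c + b * p.2 c ≤ a * p.1 i0 + b * p.2 i0} with hFdef
  have hPl : Pl ℓ a = (((gpi ℓ).prod (gpi ℓ)) F).toReal := by
    unfold Pl
    rw [dif_neg hℓ0]
    rfl
  have htop : ((ℓ : ℝ≥0∞)⁻¹ * (ℓ : ℝ≥0∞)⁻¹) ≠ ⊤ :=
    ENNReal.mul_ne_top (ENNReal.inv_ne_top.mpr (Nat.cast_ne_zero.mpr hℓ0))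
      (ENNReal.inv_ne_top.mpr (Nat.cast_ne_zero.mpr hℓ0))
  have htoReal : ((ℓ : ℝ≥0∞)⁻¹ * (ℓ : ℝ≥0∞)⁻¹).toReal = (ℓ : ℝ)⁻¹ * (ℓ : ℝ)⁻¹ := by
    simp [ENNReal.toReal_mul, ENNReal.toReal_inv]
  rcases eq_or_lt_of_le ha0 with hA | hA
  · -- a = -1, b = 0
    have hb0 : b = 0 := by
      rw [hbdef, ← hA]
      norm_num
    have hFnull : ((gpi ℓ).prod (gpi ℓ)) F = 0 := by
      have hsub : F ⊆ Prod.fst ⁻¹' {x : Fin ℓ → ℝ | x ⟨1, by omega⟩ = x i0 + 0} := by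
        intro p hp
        have h1 := (hp ⟨1, by omega⟩).1
        have h2 := (hp ⟨1, by omega⟩).2
        rw [hb0, ← hA] at h2
        simp only [mem_preimage, mem_setOf_eq, add_zero]
        linarith
      refine measure_mono_null hsub ?_
      have : (Prod.fst ⁻¹' {x : Fin ℓ → ℝ | x ⟨1, by omega⟩ = x i0 + 0} :
          Set ((Fin ℓ → ℝ) × (Fin ℓ → ℝ)))
          = {x : Fin ℓ → ℝ | x ⟨1, by omega⟩ = x i0 + 0} ×ˢ (univ : Set (Fin ℓ → ℝ)) := by
        ext p; simp
      rw [this, Measure.prod_prod, gpi_ties hi1 0, zero_mul]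
    rw [hPl, hFnull]
    simp only [ENNReal.toReal_zero, mul_zero]
    constructor
    · positivity
    · intro h
      exfalso
      have : (1 : ℝ) / ℓ ≠ 0 := by positivity
      exact this h.symm
  · -- -1 < a ≤ 0, b > 0
    have hbpos : 0 < b := by
      rw [hbdef]
      apply Real.sqrt_pos.mpr
      nlinarith
    have hmF := measure_F (ℓ := ℓ) a b i0
    have hle : ((gpi ℓ).prod (gpi ℓ)) F ≤ (ℓ : ℝ≥0∞)⁻¹ * (ℓ : ℝ≥0∞)⁻¹ := by
      rw [hFdef, hmF]
      exact lintegral_le hℓ0 ha1 hbpos.ne' i0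
    have hlereal : Pl ℓ a ≤ (ℓ : ℝ)⁻¹ * (ℓ : ℝ)⁻¹ := by
      rw [hPl, ← htoReal]
      exact ENNReal.toReal_mono htop hle
    have h2 : (ℓ : ℝ) * ((ℓ : ℝ)⁻¹ * (ℓ : ℝ)⁻¹) = 1 / (ℓ : ℝ) := by
      field_simp
    constructor
    · calc (ℓ : ℝ) * Pl ℓ a ≤ (ℓ : ℝ) * ((ℓ : ℝ)⁻¹ * (ℓ : ℝ)⁻¹) :=
            mul_le_mul_of_nonneg_left hlereal hℓR.le
        _ = 1 / (ℓ : ℝ) := h2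
    · intro heq
      by_contra hane
      have haneg : a < 0 := lt_of_le_of_ne ha1 hane
      have hlt : ((gpi ℓ).prod (gpi ℓ)) F < (ℓ : ℝ≥0∞)⁻¹ * (ℓ : ℝ≥0∞)⁻¹ := by
        rw [hFdef, hmF]
        exact lintegral_lt hℓ0 haneg hbpos hi1
      have hltreal : Pl ℓ a < (ℓ : ℝ)⁻¹ * (ℓ : ℝ)⁻¹ := by
        rw [hPl, ← htoReal]
        exact ENNReal.toReal_strict_mono htop hlt
      have : (ℓ : ℝ) * Pl ℓ a < 1 / (ℓ : ℝ) := by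
        calc (ℓ : ℝ) * Pl ℓ a < (ℓ : ℝ) * ((ℓ : ℝ)⁻¹ * (ℓ : ℝ)⁻¹) :=
            mul_lt_mul_of_pos_left hltreal hℓR
          _ = 1 / (ℓ : ℝ) := h2
      linarith [heq]
end

section
/- Let n ≥ 1 and ℓ ≥ 1 be integers, and let u, v ∈ ℝⁿ be unit vectors with inner product a = ⟨u, v⟩. Let x₁, …, x_ℓ be i.i.d. standard Gaussian random vectors in ℝⁿ (formally, the product over c ∈ {1,…,ℓ} of the standard Gaussian measure on ℝⁿ, itself the product of n copies of the standard Gaussian measure on ℝ). Then the probability of the event that ⟨u, x₁⟩ ≥ ⟨u, x_c⟩ and ⟨v, x₁⟩ ≥ ⟨v, x_c⟩ hold for all c ∈ {2, …, ℓ} equals P_ℓ(a). -/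
open MeasureTheory ProbabilityTheory
open Function Set
open scoped ENNReal


lemma lmarginal_prod {ι : Type*} [Fintype ι] [DecidableEq ι] {α : Type*} [MeasurableSpace α]
    (μ : ι → Measure α) [∀ i, SigmaFinite (μ i)] (g : ι → α → ℝ≥0∞)
    (hg : ∀ i, Measurable (g i)) (s : Finset ι) :
    (∫⋯∫⁻_s, (fun x => ∏ i ∈ s, g i (x i)) ∂μ) = fun _ => ∏ i ∈ s, ∫⁻ y, g i y ∂μ i := by
  induction s using Finset.induction_on with
  | empty => simp
  | @insert a s ha ih =>
    have hf : Measurable fun x : (i : ι) → α => ∏ i ∈ insert a s, g i (x i) :=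
      Finset.measurable_prod _ fun i _ => (hg i).comp (measurable_pi_apply i)
    have hsplit : (fun x : (i : ι) → α => ∏ i ∈ insert a s, g i (x i))
        = fun x => g a (x a) * ∏ i ∈ s, g i (x i) :=
      funext fun x => Finset.prod_insert ha
    have key : ∀ y : (i : ι) → α,
        (∫⋯∫⁻_s, (fun x => ∏ i ∈ insert a s, g i (x i)) ∂μ) y
          = g a (y a) * ∏ i ∈ s, ∫⁻ z, g i z ∂μ i := by
      intro y
      rw [hsplit]
      have h1 : (∫⋯∫⁻_s, (fun x => g a (x a) * ∏ i ∈ s, g i (x i)) ∂μ) y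
          = g a (y a) * (∫⋯∫⁻_s, (fun x => ∏ i ∈ s, g i (x i)) ∂μ) y := by
        simp only [lmarginal]
        rw [← lintegral_const_mul]
        · refine lintegral_congr fun z => ?_
          have : updateFinset y s z a = y a := by
            simp [updateFinset, ha]
          rw [this]
        · exact (Finset.measurable_prod _ fun i _ => (hg i).comp (measurable_pi_apply i)).comp
            (measurable_updateFinset)
      rw [h1, ih]
    funext x
    rw [lmarginal_insert _ hf ha]
    simp_rw [key, update_self]
    rw [lintegral_mul_const _ (hg a), Finset.prod_insert ha]

lemma lintegral_pi_prod {ι : Type*} [Fintype ι] [DecidableEq ι] {α : Type*} [MeasurableSpace α]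
    [Inhabited α] (μ : ι → Measure α) [∀ i, SigmaFinite (μ i)] (g : ι → α → ℝ≥0∞)
    (hg : ∀ i, Measurable (g i)) :
    ∫⁻ x, ∏ i, g i (x i) ∂Measure.pi μ = ∏ i, ∫⁻ y, g i y ∂μ i := by
  rw [lintegral_eq_lmarginal_univ (fun _ => default), lmarginal_prod μ g hg Finset.univ]



lemma pi_gaussian_eq_withDensity (m : ℕ) :
    (Measure.pi fun _ : Fin m => gaussianReal 0 1) =
      (volume : Measure (Fin m → ℝ)).withDensity (fun x => ∏ i, gaussianPDF 0 1 (x i)) := by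
  refine Measure.pi_eq (μ := fun _ : Fin m => gaussianReal 0 1) fun s hs => ?_
  rw [withDensity_apply _ (MeasurableSet.univ_pi hs),
    ← lintegral_indicator (MeasurableSet.univ_pi hs)]
  have hind : ∀ x : Fin m → ℝ,
      (Set.univ.pi s).indicator (fun x => ∏ i, gaussianPDF 0 1 (x i)) x
        = ∏ i, (s i).indicator (gaussianPDF 0 1) (x i) := by
    intro x
    by_cases hx : x ∈ Set.univ.pi s
    · rw [Set.indicator_of_mem hx]
      exact Finset.prod_congr rfl fun i _ =>
        (Set.indicator_of_mem (hx i (Set.mem_univ i)) _).symm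
    · rw [Set.indicator_of_notMem hx]
      rw [Set.mem_univ_pi, not_forall] at hx
      obtain ⟨i, hi⟩ := hx
      exact (Finset.prod_eq_zero (Finset.mem_univ i) (Set.indicator_of_notMem hi _)).symm
  simp_rw [hind]
  rw [volume_pi, lintegral_pi_prod _ _ (fun i => (measurable_gaussianPDF 0 1).indicator (hs i))]
  exact Finset.prod_congr rfl fun i _ => by
    rw [lintegral_indicator (hs i), ← gaussianReal_apply 0 one_ne_zero]

lemma prod_gaussianPDFReal (m : ℕ) (y : Fin m → ℝ) :
    ∏ i, gaussianPDFReal 0 1 (y i)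
      = ((Real.sqrt (2 * Real.pi))⁻¹) ^ m * Real.exp (-(∑ i, (y i) ^ 2) / 2) := by
  simp only [gaussianPDFReal, sub_zero, NNReal.coe_one, mul_one]
  rw [Finset.prod_mul_distrib, Finset.prod_const, Finset.card_univ, Fintype.card_fin,
    ← Real.exp_sum]
  congr 1
  rw [← Finset.sum_div, ← Finset.sum_neg_distrib]

lemma map_isometry_pi_gaussian {m : ℕ} (F : (Fin m → ℝ) ≃ᵐ (Fin m → ℝ))
    (hF : MeasurePreserving F volume volume)
    (hiso : ∀ x, ∑ i, (F x i) ^ 2 = ∑ i, (x i) ^ 2) :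
    Measure.map F (Measure.pi fun _ : Fin m => gaussianReal 0 1)
      = Measure.pi fun _ : Fin m => gaussianReal 0 1 := by
  have hφm : Measurable (fun x : Fin m → ℝ => ∏ i, gaussianPDF 0 1 (x i)) :=
    Finset.measurable_prod _ fun i _ => (measurable_gaussianPDF 0 1).comp (measurable_pi_apply i)
  have hcomp : ∀ x, ∏ i, gaussianPDF 0 1 (F x i) = ∏ i, gaussianPDF 0 1 (x i) := by
    intro x
    simp only [gaussianPDF]
    rw [← ENNReal.ofReal_prod_of_nonneg (fun i _ => gaussianPDFReal_nonneg 0 1 _),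
      ← ENNReal.ofReal_prod_of_nonneg (fun i _ => gaussianPDFReal_nonneg 0 1 _)]
    congr 1
    rw [prod_gaussianPDFReal, prod_gaussianPDFReal, hiso]
  rw [pi_gaussian_eq_withDensity]
  ext s hs
  rw [Measure.map_apply F.measurable hs, withDensity_apply _ (F.measurable hs),
    withDensity_apply _ hs]
  conv_rhs => rw [← hF.map_eq, setLIntegral_map hs hφm F.measurable]
  exact lintegral_congr fun x => (hcomp x).symm


lemma map_eval_pi {α : Type*} [MeasurableSpace α] (μ : Measure α) [IsProbabilityMeasure μ]
    {m : ℕ} (i : Fin m) :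
    Measure.map (fun z : Fin m → α => z i) (Measure.pi fun _ => μ) = μ := by
  ext s hs
  rw [Measure.map_apply (measurable_pi_apply i) hs]
  have hpre : (fun z : Fin m → α => z i) ⁻¹' s
      = Set.univ.pi (Function.update (fun _ => Set.univ) i s) := by
    ext z
    simp only [Set.mem_preimage, Set.mem_univ_pi, Function.update_apply]
    constructor
    · intro h k
      split_ifs with hk
      · subst hk; exact h
      · exact Set.mem_univ _
    · intro h
      have := h i
      rwa [if_pos rfl] at this
  rw [hpre, Measure.pi_pi]
  simp only [Function.apply_update (fun _ t => μ t)]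
  rw [Finset.prod_update_of_mem (Finset.mem_univ i)]
  simp [measure_univ]

lemma map_eval_pair_pi {α : Type*} [MeasurableSpace α] (μ : Measure α) [IsProbabilityMeasure μ]
    {m : ℕ} (i j : Fin m) (hij : i ≠ j) :
    Measure.map (fun z : Fin m → α => (z i, z j)) (Measure.pi fun _ => μ) = μ.prod μ := by
  refine (Measure.prod_eq (μ := μ) (ν := μ) fun s t hs ht => ?_).symm
  rw [Measure.map_apply ((measurable_pi_apply i).prodMk (measurable_pi_apply j)) (hs.prod ht)]
  have hpre : (fun z : Fin m → α => (z i, z j)) ⁻¹' (s ×ˢ t)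
      = Set.univ.pi (Function.update (Function.update (fun _ => Set.univ) i s) j t) := by
    ext z
    simp only [Set.mem_preimage, Set.mem_prod, Set.mem_univ_pi, Function.update_apply]
    constructor
    · rintro ⟨h1, h2⟩ k
      split_ifs with hk hk'
      · subst hk; exact h2
      · subst hk'; exact h1
      · exact Set.mem_univ _
    · intro h
      constructor
      · have := h i
        rwa [if_neg hij, if_pos rfl] at this
      · have := h j
        rwa [if_pos rfl] at this
  rw [hpre, Measure.pi_pi]
  simp only [Function.apply_update (fun _ r => μ r)]
  rw [Finset.prod_update_of_mem (Finset.mem_univ j),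
    Finset.prod_update_of_mem (by simp [hij] : i ∈ Finset.univ \ {j})]
  simp [measure_univ, mul_comm]

open scoped RealInnerProductSpace in
section





lemma euclidean_inner_symm (n : ℕ) (x y : Fin n → ℝ) :
    (inner ℝ ((WithLp.equiv 2 (Fin n → ℝ)).symm x) ((WithLp.equiv 2 (Fin n → ℝ)).symm y) : ℝ)
      = ∑ i, x i * y i := by
  simp [PiLp.inner_apply, WithLp.equiv_symm_apply, PiLp.toLp_apply, RCLike.inner_apply, conj_trivial]
  exact Finset.sum_congr rfl fun i _ => mul_comm _ _

section basis

variable {n : ℕ}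

/-- Given an orthonormal system `b` (as an orthonormal basis of Euclidean space) we build the
measurable self-equivalence of `Fin n → ℝ` given by `x ↦ b.repr x`. -/
noncomputable def reprEquiv (b : OrthonormalBasis (Fin n) ℝ (EuclideanSpace ℝ (Fin n))) :
    (Fin n → ℝ) ≃ᵐ (Fin n → ℝ) :=
  (MeasurableEquiv.toLp 2 (Fin n → ℝ)).trans
    (b.repr.toHomeomorph.toMeasurableEquiv.trans (MeasurableEquiv.toLp 2 (Fin n → ℝ)).symm)

lemma reprEquiv_apply (b : OrthonormalBasis (Fin n) ℝ (EuclideanSpace ℝ (Fin n)))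
    (x : Fin n → ℝ) (k : Fin n) :
    reprEquiv b x k = (inner ℝ (b k) ((WithLp.equiv 2 (Fin n → ℝ)).symm x) : ℝ) := by
  simp only [reprEquiv, MeasurableEquiv.coe_trans, Function.comp_apply,
    MeasurableEquiv.coe_toLp, MeasurableEquiv.coe_toLp_symm,
    Homeomorph.toMeasurableEquiv_coe, LinearIsometryEquiv.coe_toHomeomorph,
    WithLp.equiv_symm_apply, OrthonormalBasis.repr_apply_apply]

lemma reprEquiv_volume (b : OrthonormalBasis (Fin n) ℝ (EuclideanSpace ℝ (Fin n))) :
    MeasurePreserving (reprEquiv b) volume volume := by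
  simp only [reprEquiv, MeasurableEquiv.coe_trans]
  exact ((EuclideanSpace.volume_preserving_symm_measurableEquiv_toLp (Fin n)).comp
      b.measurePreserving_repr).comp
    (EuclideanSpace.volume_preserving_symm_measurableEquiv_toLp (Fin n)).symm

lemma reprEquiv_iso (b : OrthonormalBasis (Fin n) ℝ (EuclideanSpace ℝ (Fin n)))
    (x : Fin n → ℝ) : ∑ k, (reprEquiv b x k) ^ 2 = ∑ k, (x k) ^ 2 := by
  set y : EuclideanSpace ℝ (Fin n) := (WithLp.equiv 2 (Fin n → ℝ)).symm x with hy
  have h1 : ∀ k, reprEquiv b x k = b.repr y k := by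
    intro k; rw [reprEquiv_apply, OrthonormalBasis.repr_apply_apply]
  calc ∑ k, (reprEquiv b x k) ^ 2 = ∑ k, b.repr y k * b.repr y k := by
        simp [h1, pow_two]
    _ = ∑ k, x k * x k := by
        have h3 : (inner ℝ (b.repr y) (b.repr y) : ℝ) = ∑ k, b.repr y k * b.repr y k := by
          rw [PiLp.inner_apply]
          simp only [RCLike.inner_apply, conj_trivial]
        rw [← h3, b.repr.inner_map_map, hy]
        exact euclidean_inner_symm n x x
    _ = ∑ k, (x k) ^ 2 := by simp [pow_two]

end basis

lemma map_pair_inner_pi_gaussian {n : ℕ} (hn : 2 ≤ n) (u w : Fin n → ℝ)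
    (huu : ∑ i, u i * u i = 1) (hww : ∑ i, w i * w i = 1) (huw : ∑ i, u i * w i = 0) :
    Measure.map (fun y : Fin n → ℝ => (∑ i, u i * y i, ∑ i, w i * y i))
      (Measure.pi fun _ : Fin n => gaussianReal 0 1)
      = (gaussianReal 0 1).prod (gaussianReal 0 1) := by
  have h0n : 0 < n := lt_of_lt_of_le two_pos hn
  have h1n : 1 < n := lt_of_lt_of_le one_lt_two hn
  set i0 : Fin n := ⟨0, h0n⟩
  set i1 : Fin n := ⟨1, h1n⟩
  have hne : i0 ≠ i1 := by simp [i0, i1, Fin.ext_iff]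
  set u' : EuclideanSpace ℝ (Fin n) := (WithLp.equiv 2 (Fin n → ℝ)).symm u with hu'
  set w' : EuclideanSpace ℝ (Fin n) := (WithLp.equiv 2 (Fin n → ℝ)).symm w with hw'
  set vfam : Fin n → EuclideanSpace ℝ (Fin n) := fun k => if k = i0 then u' else w' with hvfam
  have horth : Orthonormal ℝ (({i0, i1} : Set (Fin n)).restrict vfam) := by
    rw [orthonormal_iff_ite]
    rintro ⟨i, hi⟩ ⟨j, hj⟩
    simp only [Set.restrict, Set.domRestrict_apply]
    simp only [Set.mem_insert_iff, Set.mem_singleton_iff] at hi hj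
    have calc_uu := (euclidean_inner_symm n u u).trans huu
    have calc_ww := (euclidean_inner_symm n w w).trans hww
    have calc_uw := (euclidean_inner_symm n u w).trans huw
    have calc_wu : (inner ℝ w' u' : ℝ) = 0 := by
      rw [real_inner_comm]; exact calc_uw
    have nu : ‖u'‖ = 1 := by rw [norm_eq_sqrt_real_inner, hu', calc_uu, Real.sqrt_one]
    have nw : ‖w'‖ = 1 := by rw [norm_eq_sqrt_real_inner, hw', calc_ww, Real.sqrt_one]
    have ouw : (inner ℝ u' w' : ℝ) = 0 := calc_uw
    rcases hi with hi | hi <;> rcases hj with hj | hj <;> subst hi <;> subst hj <;>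
      simp [vfam, hne, hne.symm, Subtype.ext_iff, calc_uu, calc_ww, calc_uw, calc_wu, nu, nw, ouw]
  have hcard : Module.finrank ℝ (EuclideanSpace ℝ (Fin n)) = Fintype.card (Fin n) := by
    simp [finrank_euclideanSpace]
  obtain ⟨b, hb⟩ := horth.exists_orthonormalBasis_extension_of_card_eq hcard
  have hb0 : b i0 = u' := by
    rw [hb i0 (Set.mem_insert _ _)]; simp [vfam]
  have hb1 : b i1 = w' := by
    rw [hb i1 (Set.mem_insert_of_mem _ rfl)]; simp [vfam, hne.symm]
  have hT : (fun y : Fin n → ℝ => (∑ i, u i * y i, ∑ i, w i * y i))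
      = (fun z : Fin n → ℝ => (z i0, z i1)) ∘ (reprEquiv b) := by
    funext y
    simp only [Function.comp_apply, reprEquiv_apply, hb0, hb1, hu', hw',
      euclidean_inner_symm]
  rw [hT, ← Measure.map_map ((measurable_pi_apply i0).prodMk (measurable_pi_apply i1))
      (reprEquiv b).measurable,
    map_isometry_pi_gaussian (reprEquiv b) (reprEquiv_volume b) (reprEquiv_iso b),
    map_eval_pair_pi _ i0 i1 hne]

lemma map_inner_pi_gaussian {n : ℕ} (hn : 1 ≤ n) (u : Fin n → ℝ)
    (huu : ∑ i, u i * u i = 1) :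
    Measure.map (fun y : Fin n → ℝ => ∑ i, u i * y i)
      (Measure.pi fun _ : Fin n => gaussianReal 0 1) = gaussianReal 0 1 := by
  have h0n : 0 < n := hn
  set i0 : Fin n := ⟨0, h0n⟩
  set u' : EuclideanSpace ℝ (Fin n) := (WithLp.equiv 2 (Fin n → ℝ)).symm u with hu'
  set vfam : Fin n → EuclideanSpace ℝ (Fin n) := fun _ => u' with hvfam
  have horth : Orthonormal ℝ (({i0} : Set (Fin n)).restrict vfam) := by
    rw [orthonormal_iff_ite]
    rintro ⟨i, hi⟩ ⟨j, hj⟩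
    simp only [Set.mem_singleton_iff] at hi hj
    subst hi; subst hj
    have calc_uu := (euclidean_inner_symm n u u).trans huu
    have nu : ‖u'‖ = 1 := by rw [norm_eq_sqrt_real_inner, hu', calc_uu, Real.sqrt_one]
    simp [vfam, calc_uu, Set.restrict, nu]
  have hcard : Module.finrank ℝ (EuclideanSpace ℝ (Fin n)) = Fintype.card (Fin n) := by
    simp [finrank_euclideanSpace]
  obtain ⟨b, hb⟩ := horth.exists_orthonormalBasis_extension_of_card_eq hcard
  have hb0 : b i0 = u' := by rw [hb i0 rfl]
  have hT : (fun y : Fin n → ℝ => ∑ i, u i * y i)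
      = (fun z : Fin n → ℝ => z i0) ∘ (reprEquiv b) := by
    funext y
    simp only [Function.comp_apply, reprEquiv_apply, hb0, hu', euclidean_inner_symm]
  rw [hT, ← Measure.map_map (measurable_pi_apply i0) (reprEquiv b).measurable,
    map_isometry_pi_gaussian (reprEquiv b) (reprEquiv_volume b) (reprEquiv_iso b),
    map_eval_pi _ i0]

end




/-- For unit vectors `u, v ∈ ℝⁿ` with `⟨u,v⟩ = a` and `x₁,…,x_ℓ` i.i.d. standard
Gaussian vectors in `ℝⁿ`, the probability that `⟨u,x₁⟩ ≥ ⟨u,x_c⟩` and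
`⟨v,x₁⟩ ≥ ⟨v,x_c⟩` for all `c` equals `P_ℓ(a)`. -/
theorem stmt_6 (n ℓ : ℕ) (hn : 1 ≤ n) (hℓ : 0 < ℓ)
    (u v : Fin n → ℝ) (hu : ∑ i, u i * u i = 1) (hv : ∑ i, v i * v i = 1)
    (a : ℝ) (ha : a = ∑ i, u i * v i) :
    ((Measure.pi fun _ : Fin ℓ => (Measure.pi fun _ : Fin n => gaussianReal 0 1))
      {x | ∀ c : Fin ℓ,
        (∑ i, u i * x c i) ≤ (∑ i, u i * x ⟨0, hℓ⟩ i) ∧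
        (∑ i, v i * x c i) ≤ (∑ i, v i * x ⟨0, hℓ⟩ i)}).toReal = Pl ℓ a := by
  have hℓ0 : ℓ ≠ 0 := hℓ.ne'
  set c0 : Fin ℓ := ⟨0, hℓ⟩
  -- the sum of squares of v - a•u
  have hsum : ∑ i, (v i - a * u i) * (v i - a * u i) = 1 - a ^ 2 := by
    have expand : ∀ i, (v i - a * u i) * (v i - a * u i)
        = v i * v i - 2 * a * (u i * v i) + a ^ 2 * (u i * u i) := fun i => by ring
    rw [Finset.sum_congr rfl fun i _ => expand i]
    rw [Finset.sum_add_distrib, Finset.sum_sub_distrib, ← Finset.mul_sum, ← Finset.mul_sum,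
      hu, hv, ← ha]
    ring
  have hnn : 0 ≤ 1 - a ^ 2 := hsum ▸ Finset.sum_nonneg fun i _ => mul_self_nonneg _
  have hSu_meas : Measurable (fun y : Fin n → ℝ => ∑ i, u i * y i) :=
    Finset.measurable_sum _ fun i _ => (measurable_pi_apply (X := fun _ => ℝ) i).const_mul (u i)
  rw [Pl, dif_neg hℓ0]
  by_cases hone : 1 - a ^ 2 = 0
  · -- degenerate case: v = a • u
    have hsqrt : Real.sqrt (1 - a ^ 2) = 0 := by rw [hone, Real.sqrt_zero]
    have hva : ∀ i, v i = a * u i := by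
      intro i
      have hz := (Finset.sum_eq_zero_iff_of_nonneg
        (fun i _ => mul_self_nonneg (v i - a * u i))).mp (by rw [hsum, hone]) i (Finset.mem_univ i)
      have := mul_self_eq_zero.mp hz
      linarith
    have hvy : ∀ y : Fin n → ℝ, ∑ i, v i * y i = a * ∑ i, u i * y i := by
      intro y
      rw [Finset.mul_sum]
      exact Finset.sum_congr rfl fun i _ => by rw [hva i]; ring
    set T : Set (Fin ℓ → ℝ) := {q | ∀ c : Fin ℓ, q c ≤ q c0 ∧ a * q c ≤ a * q c0} with hT
    have hTmeas : MeasurableSet T := by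
      have : T = ⋂ c : Fin ℓ, ({q : Fin ℓ → ℝ | q c ≤ q c0} ∩ {q | a * q c ≤ a * q c0}) := by
        ext q; simp [hT, Set.mem_iInter, forall_and, Set.mem_setOf_eq]
      rw [this]
      exact MeasurableSet.iInter fun c =>
        (measurableSet_le (measurable_pi_apply c) (measurable_pi_apply c0)).inter
          (measurableSet_le ((measurable_pi_apply (X := fun _ => ℝ) c).const_mul a)
            ((measurable_pi_apply (X := fun _ => ℝ) c0).const_mul a))
    have hG : MeasurePreserving (fun (x : Fin ℓ → Fin n → ℝ) (c : Fin ℓ) => ∑ i, u i * x c i)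
        (Measure.pi fun _ : Fin ℓ => (Measure.pi fun _ : Fin n => gaussianReal 0 1))
        (Measure.pi fun _ : Fin ℓ => gaussianReal 0 1) :=
      measurePreserving_pi _ _ fun _ => ⟨hSu_meas, map_inner_pi_gaussian hn u hu⟩
    have hpre : {x : Fin ℓ → Fin n → ℝ | ∀ c : Fin ℓ,
        (∑ i, u i * x c i) ≤ (∑ i, u i * x c0 i) ∧
        (∑ i, v i * x c i) ≤ (∑ i, v i * x c0 i)}
        = (fun (x : Fin ℓ → Fin n → ℝ) (c : Fin ℓ) => ∑ i, u i * x c i) ⁻¹' T := by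
      ext x
      simp only [Set.mem_setOf_eq, Set.mem_preimage, hT]
      exact forall_congr' fun c => and_congr Iff.rfl (by rw [hvy (x c), hvy (x c0)])
    have hPlset : {p : (Fin ℓ → ℝ) × (Fin ℓ → ℝ) | ∀ c : Fin ℓ,
        p.1 c ≤ p.1 ⟨0, Nat.pos_of_ne_zero hℓ0⟩ ∧
        a * p.1 c + Real.sqrt (1 - a ^ 2) * p.2 c ≤
          a * p.1 ⟨0, Nat.pos_of_ne_zero hℓ0⟩ +
            Real.sqrt (1 - a ^ 2) * p.2 ⟨0, Nat.pos_of_ne_zero hℓ0⟩} = Prod.fst ⁻¹' T := by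
      ext p
      simp only [Set.mem_setOf_eq, Set.mem_preimage, hT, hsqrt, zero_mul, add_zero]
      exact Iff.rfl
    rw [hpre, hPlset, ← Set.prod_univ, Measure.prod_prod, measure_univ, mul_one,
      ← hG.map_eq, Measure.map_apply hG.measurable hTmeas]
  · have hpos : 0 < 1 - a ^ 2 := lt_of_le_of_ne hnn (Ne.symm hone)
    have hbr : 0 < Real.sqrt (1 - a ^ 2) := Real.sqrt_pos.mpr hpos
    have hbrsq : Real.sqrt (1 - a ^ 2) * Real.sqrt (1 - a ^ 2) = 1 - a ^ 2 :=
      Real.mul_self_sqrt hnn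
    set w : Fin n → ℝ := fun i => (v i - a * u i) / Real.sqrt (1 - a ^ 2) with hw
    have hww : ∑ i, w i * w i = 1 := by
      have : ∀ i, w i * w i = (v i - a * u i) * (v i - a * u i) / (1 - a ^ 2) := by
        intro i
        rw [hw, div_mul_div_comm, hbrsq]
      rw [Finset.sum_congr rfl fun i _ => this i, ← Finset.sum_div, hsum, div_self hone]
    have huw : ∑ i, u i * w i = 0 := by
      have : ∀ i, u i * w i
          = (u i * v i - a * (u i * u i)) / Real.sqrt (1 - a ^ 2) := by
        intro i
        rw [hw]
        field_simp
      rw [Finset.sum_congr rfl fun i _ => this i, ← Finset.sum_div,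
        Finset.sum_sub_distrib, ← Finset.mul_sum, hu, ← ha]
      simp
    have hn2 : 2 ≤ n := by
      by_contra hcon
      have hn1 : n = 1 := by omega
      subst hn1
      rw [Fin.sum_univ_one] at hu hww huw
      rcases mul_eq_zero.mp huw with h | h
      · rw [h] at hu; simp at hu
      · rw [h] at hww; simp at hww
    have hvy : ∀ y : Fin n → ℝ, ∑ i, v i * y i
        = a * (∑ i, u i * y i) + Real.sqrt (1 - a ^ 2) * (∑ i, w i * y i) := by
      intro y
      rw [Finset.mul_sum, Finset.mul_sum, ← Finset.sum_add_distrib]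
      refine Finset.sum_congr rfl fun i _ => ?_
      have hvi : v i = a * u i + Real.sqrt (1 - a ^ 2) * w i := by
        rw [hw, mul_comm (Real.sqrt (1 - a ^ 2)), div_mul_cancel₀ _ hbr.ne']
        ring
      rw [hvi]; ring
    have hSw_meas : Measurable (fun y : Fin n → ℝ => ∑ i, w i * y i) :=
      Finset.measurable_sum _ fun i _ => (measurable_pi_apply (X := fun _ => ℝ) i).const_mul (w i)
    have hG2 : MeasurePreserving
        (fun (x : Fin ℓ → Fin n → ℝ) (c : Fin ℓ) => (∑ i, u i * x c i, ∑ i, w i * x c i))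
        (Measure.pi fun _ : Fin ℓ => (Measure.pi fun _ : Fin n => gaussianReal 0 1))
        (Measure.pi fun _ : Fin ℓ => (gaussianReal 0 1).prod (gaussianReal 0 1)) :=
      measurePreserving_pi _ _ fun _ =>
        ⟨hSu_meas.prodMk hSw_meas, map_pair_inner_pi_gaussian hn2 u w hu hww huw⟩
    have hH := (measurePreserving_arrowProdEquivProdArrow ℝ ℝ (Fin ℓ)
      (fun _ => gaussianReal 0 1) (fun _ => gaussianReal 0 1)).comp hG2
    set S₀ : Set ((Fin ℓ → ℝ) × (Fin ℓ → ℝ)) := {p | ∀ c : Fin ℓ,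
        p.1 c ≤ p.1 c0 ∧
        a * p.1 c + Real.sqrt (1 - a ^ 2) * p.2 c ≤
          a * p.1 c0 + Real.sqrt (1 - a ^ 2) * p.2 c0} with hS₀
    have hS₀meas : MeasurableSet S₀ := by
      have m1 : ∀ c : Fin ℓ, Measurable (fun p : (Fin ℓ → ℝ) × (Fin ℓ → ℝ) => p.1 c) :=
        fun c => (measurable_pi_apply c).comp measurable_fst
      have m2 : ∀ c : Fin ℓ, Measurable (fun p : (Fin ℓ → ℝ) × (Fin ℓ → ℝ) => p.2 c) :=
        fun c => (measurable_pi_apply c).comp measurable_snd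
      have : S₀ = ⋂ c : Fin ℓ,
          ({p : (Fin ℓ → ℝ) × (Fin ℓ → ℝ) | p.1 c ≤ p.1 c0} ∩
            {p | a * p.1 c + Real.sqrt (1 - a ^ 2) * p.2 c ≤
              a * p.1 c0 + Real.sqrt (1 - a ^ 2) * p.2 c0}) := by
        ext p; simp [hS₀, Set.mem_iInter, forall_and, Set.mem_setOf_eq]
      rw [this]
      exact MeasurableSet.iInter fun c =>
        (measurableSet_le (m1 c) (m1 c0)).inter
          (measurableSet_le (((m1 c).const_mul a).add ((m2 c).const_mul _))
            (((m1 c0).const_mul a).add ((m2 c0).const_mul _)))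
    have hpre : {x : Fin ℓ → Fin n → ℝ | ∀ c : Fin ℓ,
        (∑ i, u i * x c i) ≤ (∑ i, u i * x c0 i) ∧
        (∑ i, v i * x c i) ≤ (∑ i, v i * x c0 i)}
        = (⇑(MeasurableEquiv.arrowProdEquivProdArrow ℝ ℝ (Fin ℓ)) ∘
            fun (x : Fin ℓ → Fin n → ℝ) (c : Fin ℓ) =>
              (∑ i, u i * x c i, ∑ i, w i * x c i)) ⁻¹' S₀ := by
      ext x
      simp only [Set.mem_setOf_eq, Set.mem_preimage, hS₀, Function.comp_apply,
        MeasurableEquiv.arrowProdEquivProdArrow, Equiv.arrowProdEquivProdArrow,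
        MeasurableEquiv.coe_mk, Equiv.coe_fn_mk]
      exact forall_congr' fun c => and_congr Iff.rfl (by rw [hvy (x c), hvy (x c0)])
    rw [hpre, ← hH.map_eq, Measure.map_apply hH.measurable hS₀meas]
end

section
/- Define F_T(x) = x²·(1 + T·ln x) for x > 0 and F_T(0) = 0. There exists an absolute constant T₀ > 0 such that: for every real T with 0 < T ≤ T₀, every integer ℓ ≥ 1 with ℓ < e^{1/T}, and all nonnegative reals x₁, …, x_ℓ with x₁ + ⋯ + x_ℓ = 1, one has ∑_{i=1}^ℓ F_T(x_i) ≥ 1/ℓ - T·(ln ℓ)/ℓ - 4·ℓ·e^{-1/T}. -/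
/-- `F T x = x²(1 + T ln x)` for `x > 0`, with `F T 0 = 0`. -/
noncomputable def F (T x : ℝ) : ℝ :=
  if x = 0 then 0 else x ^ 2 * (1 + T * Real.log x)

lemma F_eq (T x : ℝ) : F T x = x ^ 2 * (1 + T * Real.log x) := by
  unfold F
  split
  · rename_i h; subst h; simp
  · rfl

/-- Global tangent-line inequality for `F T` at `p`, valid when `1 + T log p ≥ 0`. -/
lemma F_tangent (T p x : ℝ) (hT : 0 ≤ T) (hp : 0 < p)
    (hcond : 0 ≤ 1 + T * Real.log p) (hx : 0 ≤ x) :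
    F T p + p * (2 + 2 * T * Real.log p + T) * (x - p) ≤ F T x := by
  rw [F_eq, F_eq]
  rcases eq_or_lt_of_le hx with h0 | hxpos
  · subst h0
    simp only [Real.log_zero]
    nlinarith [mul_nonneg (sq_nonneg p) hcond, mul_nonneg (sq_nonneg p) hT,
      mul_nonneg (mul_nonneg (sq_nonneg p) hT) hcond]
  · have hlog : Real.log p - Real.log x ≤ p / x - 1 := by
      have h := Real.log_le_sub_one_of_pos (show 0 < p / x by positivity)
      rwa [Real.log_div (ne_of_gt hp) (ne_of_gt hxpos)] at h
    have hmul : x ^ 2 * (Real.log p - Real.log x) ≤ x ^ 2 * (p / x - 1) :=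
      mul_le_mul_of_nonneg_left hlog (sq_nonneg x)
    have hid : x ^ 2 * (p / x - 1) = x * p - x ^ 2 := by
      field_simp
    have h1 : 0 ≤ x ^ 2 * (Real.log x - Real.log p) - (x ^ 2 - x * p) := by nlinarith
    nlinarith [mul_nonneg hT h1, sq_nonneg (x - p), mul_nonneg hcond (sq_nonneg (x - p)),
      mul_nonneg hT (sq_nonneg (x - p))]

/-- There is an absolute constant `T₀ > 0` such that for `0 < T ≤ T₀`, `ℓ ≥ 1` with
`ℓ < e^{1/T}`, and nonnegative `x₁,…,x_ℓ` summing to 1, we have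
`∑ F T (x i) ≥ 1/ℓ - T ln ℓ/ℓ - 4ℓ e^{-1/T}`. -/
theorem stmt_8 :
    ∃ T₀ : ℝ, 0 < T₀ ∧
      ∀ T : ℝ, 0 < T → T ≤ T₀ →
        ∀ ℓ : ℕ, 1 ≤ ℓ → (ℓ : ℝ) < Real.exp (1 / T) →
          ∀ x : Fin ℓ → ℝ, (∀ i, 0 ≤ x i) → (∑ i, x i) = 1 →
            (∑ i, F T (x i)) ≥
              1 / (ℓ : ℝ) - T * Real.log ℓ / ℓ - 4 * (ℓ : ℝ) * Real.exp (-1 / T) := by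
  refine ⟨1, one_pos, ?_⟩
  intro T hT _ ℓ hℓ hℓT x hx hsum
  have hℓpos : (0:ℝ) < (ℓ : ℝ) := by exact_mod_cast hℓ
  set p : ℝ := 1 / (ℓ : ℝ) with hpdef
  have hp : 0 < p := by positivity
  have hlogp : Real.log p = - Real.log ℓ := by
    rw [hpdef, one_div, Real.log_inv]
  have hlogℓ : Real.log ℓ < 1 / T := (Real.log_lt_iff_lt_exp hℓpos).2 hℓT
  have hcond : 0 ≤ 1 + T * Real.log p := by
    rw [hlogp]
    have := (mul_lt_mul_of_pos_left hlogℓ hT)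
    rw [mul_one_div, div_self (ne_of_gt hT)] at this
    linarith
  have hpoint : ∀ i : Fin ℓ,
      F T p + p * (2 + 2 * T * Real.log p + T) * (x i - p) ≤ F T (x i) :=
    fun i => F_tangent T p (x i) hT.le hp hcond (hx i)
  have hsum' : ∑ i, (F T p + p * (2 + 2 * T * Real.log p + T) * (x i - p))
      ≤ ∑ i, F T (x i) := Finset.sum_le_sum fun i _ => hpoint i
  have hcard : (Finset.univ : Finset (Fin ℓ)).card = ℓ := by simp
  have hlp : (ℓ : ℝ) * p = 1 := by
    rw [hpdef]; field_simp
  have hsum'' : ∑ i, (F T p + p * (2 + 2 * T * Real.log p + T) * (x i - p))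
      = (ℓ : ℝ) * F T p := by
    rw [Finset.sum_add_distrib, Finset.sum_const, hcard, ← Finset.mul_sum,
      Finset.sum_sub_distrib, hsum, Finset.sum_const, hcard, nsmul_eq_mul, nsmul_eq_mul, hlp]
    ring
  have hFp : (ℓ : ℝ) * F T p = 1 / (ℓ : ℝ) - T * Real.log ℓ / ℓ := by
    rw [F_eq, hlogp, hpdef]
    field_simp
    ring
  have hpos : 0 ≤ 4 * (ℓ : ℝ) * Real.exp (-1 / T) := by positivity
  have := hsum'.trans_eq' hsum''
  linarith [hsum', hsum''.symm.trans_le hsum', hpdef]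
end

section
/- There exists a real ρ₀ > 0 such that for every real ρ with 0 ≤ ρ ≤ ρ₀ and every real μ with 0 < μ < 1, one has Λ_ρ(μ) ≤ μ² + 3ρ. -/
open MeasureTheory ProbabilityTheory Real Set

/-- The standard normal cumulative distribution function. -/
noncomputable def stdPhi (u : ℝ) : ℝ := ((gaussianReal 0 1) (Set.Iic u)).toReal

lemma pdf_eq (x : ℝ) : gaussianPDFReal 0 1 x = (Real.sqrt (2 * π))⁻¹ * Real.exp (-x ^ 2 / 2) := by
  simp [gaussianPDFReal]

lemma sqrt2pi_ge_two : (2 : ℝ) ≤ Real.sqrt (2 * π) := by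
  have : (2:ℝ)^2 ≤ 2 * π := by nlinarith [Real.pi_gt_three]
  nlinarith [Real.sq_sqrt (by positivity : (0:ℝ) ≤ 2 * π), Real.sqrt_nonneg (2*π)]

lemma pdf_le_half (x : ℝ) : gaussianPDFReal 0 1 x ≤ 1 / 2 := by
  rw [pdf_eq]
  have h1 : Real.exp (-x ^ 2 / 2) ≤ 1 := by
    rw [Real.exp_le_one_iff]; nlinarith [sq_nonneg x]
  have h2 : (Real.sqrt (2 * π))⁻¹ ≤ 1 / 2 := by
    rw [inv_le_iff_one_le_mul₀ (by positivity)]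
    nlinarith [sqrt2pi_ge_two]
  nlinarith [Real.exp_pos (-x^2/2), Real.sqrt_nonneg (2*π)]

lemma pdf_anti {a x : ℝ} (ha : 0 ≤ a) (hax : a ≤ x) :
    gaussianPDFReal 0 1 x ≤ gaussianPDFReal 0 1 a := by
  rw [pdf_eq, pdf_eq]
  have : Real.exp (-x ^ 2 / 2) ≤ Real.exp (-a ^ 2 / 2) := by
    apply Real.exp_le_exp.2; nlinarith
  have h0 : (0:ℝ) < (Real.sqrt (2 * π))⁻¹ := by positivity
  nlinarith

lemma stdPhi_mono : Monotone stdPhi := by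
  intro a b hab
  unfold stdPhi
  exact ENNReal.toReal_mono (measure_ne_top _ _) (measure_mono (Iic_subset_Iic.2 hab))

lemma stdPhi_diff (a b : ℝ) (hab : a ≤ b) :
    stdPhi b - stdPhi a = ∫ x in Set.Ioc a b, gaussianPDFReal 0 1 x := by
  have hIic : Set.Iic b = Set.Iic a ∪ Set.Ioc a b := (Set.Iic_union_Ioc_eq_Iic hab).symm
  have hd : Disjoint (Set.Iic a) (Set.Ioc a b) := by
    exact Set.Iic_disjoint_Ioc le_rfl
  have := measure_union (μ := gaussianReal 0 1) hd measurableSet_Ioc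
  rw [← hIic] at this
  unfold stdPhi
  rw [this, ENNReal.toReal_add (measure_ne_top _ _) (measure_ne_top _ _)]
  rw [gaussianReal_apply_eq_integral 0 one_ne_zero (Set.Ioc a b),
    ENNReal.toReal_ofReal (integral_nonneg fun x => gaussianPDFReal_nonneg 0 1 x)]
  ring

lemma stdPhi_sub_le {a b c : ℝ} (hab : a ≤ b) (hc : 0 ≤ c)
    (hpdf : ∀ x ∈ Set.Ioc a b, gaussianPDFReal 0 1 x ≤ c) :
    stdPhi b - stdPhi a ≤ (b - a) * c := by
  rw [stdPhi_diff a b hab]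
  calc ∫ x in Set.Ioc a b, gaussianPDFReal 0 1 x
      ≤ ∫ _ in Set.Ioc a b, c := by
        apply setIntegral_mono_on (integrable_gaussianPDFReal 0 1).integrableOn
          (integrableOn_const measure_Ioc_lt_top.ne) measurableSet_Ioc hpdf
    _ = (b - a) * c := by
        rw [setIntegral_const, measureReal_def, Real.volume_Ioc, smul_eq_mul,
          ENNReal.toReal_ofReal (by linarith)]

lemma inv_sqrt2pi_le : (Real.sqrt (2 * π))⁻¹ ≤ 1 / 2 := by
  rw [inv_le_iff_one_le_mul₀ (by positivity)]
  nlinarith [sqrt2pi_ge_two]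

lemma stdPhi_lip {a b : ℝ} (hab : a ≤ b) : stdPhi b ≤ stdPhi a + (b - a) := by
  have := stdPhi_sub_le hab (by norm_num : (0:ℝ) ≤ 1/2) (fun x _ => pdf_le_half x)
  nlinarith

lemma key_pointwise {ρ u x : ℝ} (hρ0 : 0 ≤ ρ) (hρ : ρ ≤ 1/2) :
    stdPhi ((u - ρ * x) / Real.sqrt (1 - ρ ^ 2)) ≤ stdPhi u + ρ ^ 2 + ρ * |x| := by
  set s : ℝ := Real.sqrt (1 - ρ ^ 2) with hs_def
  set t : ℝ := u - ρ * x with ht_def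
  have hsq : s ^ 2 = 1 - ρ ^ 2 := Real.sq_sqrt (by nlinarith)
  have hs1 : s ≤ 1 := by nlinarith [Real.sqrt_nonneg (1 - ρ^2)]
  have hs2 : 1 / 2 ≤ s := by nlinarith [Real.sqrt_nonneg (1 - ρ^2)]
  have hs0 : 0 < s := by linarith
  have h1s : 1 - s ≤ ρ ^ 2 := by nlinarith
  have htu : stdPhi t ≤ stdPhi u + ρ * |x| := by
    rcases le_total t u with h | h
    · have := stdPhi_mono h
      have : 0 ≤ ρ * |x| := mul_nonneg hρ0 (abs_nonneg x)
      linarith [stdPhi_mono h]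
    · have := stdPhi_lip h
      have hx : t - u ≤ ρ * |x| := by
        have : -x ≤ |x| := neg_le_abs x
        have := mul_le_mul_of_nonneg_left this hρ0
        simp only [ht_def]; linarith
      linarith
  rcases le_or_gt 0 t with ht | ht
  · -- t ≥ 0 : t ≤ t/s
    have hts : t ≤ t / s := by
      rw [le_div_iff₀ hs0]; nlinarith
    have hmain : stdPhi (t / s) - stdPhi t ≤ (t / s - t) * gaussianPDFReal 0 1 t :=
      stdPhi_sub_le hts (gaussianPDFReal_nonneg 0 1 t)
        (fun y hy => pdf_anti ht (le_of_lt hy.1))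
    have hub : t / s - t ≤ 2 * t * (1 - s) := by
      rw [sub_le_iff_le_add, div_le_iff₀ hs0]
      nlinarith [mul_nonneg ht (mul_nonneg (by linarith : (0:ℝ) ≤ 2*s-1) (by linarith : (0:ℝ) ≤ 1-s))]
    have hte : t * Real.exp (-t ^ 2 / 2) ≤ 1 := by
      have hexp : t ≤ Real.exp (t ^ 2 / 2) := by
        nlinarith [Real.add_one_le_exp (t ^ 2 / 2), sq_nonneg (t - 1)]
      have h1 : t * (Real.exp (t ^ 2 / 2))⁻¹ ≤ Real.exp (t ^ 2 / 2) * (Real.exp (t ^ 2 / 2))⁻¹ :=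
        mul_le_mul_of_nonneg_right hexp (by positivity)
      rw [mul_inv_cancel₀ (ne_of_gt (Real.exp_pos _))] at h1
      rwa [show -t ^ 2 / 2 = -(t ^ 2 / 2) by ring, Real.exp_neg]
    have htpdf : t * gaussianPDFReal 0 1 t ≤ 1 / 2 := by
      rw [pdf_eq]
      have he0 : (0:ℝ) ≤ Real.exp (-t ^ 2 / 2) := (Real.exp_pos _).le
      have hc0 : (0:ℝ) ≤ (Real.sqrt (2 * π))⁻¹ := by positivity
      nlinarith [inv_sqrt2pi_le, mul_nonneg ht he0]
    have hfin : (t / s - t) * gaussianPDFReal 0 1 t ≤ ρ ^ 2 := by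
      have hp0 := gaussianPDFReal_nonneg 0 1 t
      nlinarith [mul_le_mul_of_nonneg_right hub hp0]
    linarith
  · -- t < 0 : t/s ≤ t
    have hts : t / s ≤ t := by
      rw [div_le_iff₀ hs0]; nlinarith
    have := stdPhi_mono hts
    have : (0:ℝ) ≤ ρ ^ 2 := sq_nonneg ρ
    linarith [stdPhi_mono hts]

lemma integrable_abs_exp : Integrable (fun x : ℝ => |x| * Real.exp (-x ^ 2 / 2)) := by
  have h := (integrable_mul_exp_neg_mul_sq (by norm_num : (0:ℝ) < 1/2)).abs
  have he : (fun x : ℝ => |x * Real.exp (-(1/2) * x ^ 2)|)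
      = fun x : ℝ => |x| * Real.exp (-x ^ 2 / 2) := by
    funext x
    rw [abs_mul, abs_of_pos (Real.exp_pos _)]
    ring_nf
  rwa [he] at h

lemma integral_Ioi_mul_exp : ∫ x in Set.Ioi (0:ℝ), x * Real.exp (-x ^ 2 / 2) = 1 := by
  have A : ∀ x : ℝ, HasDerivAt (fun y : ℝ => -Real.exp (-y ^ 2 / 2))
      (x * Real.exp (-x ^ 2 / 2)) x := by
    intro x
    have h1 : HasDerivAt (fun y : ℝ => -y ^ 2 / 2) (-x) x := by
      have h := ((hasDerivAt_pow 2 x).neg).div_const 2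
      refine h.congr_deriv ?_
      simp; ring
    have h2 := (h1.exp).neg
    refine h2.congr_deriv ?_
    ring
  have B : Filter.Tendsto (fun y : ℝ => -Real.exp (-y ^ 2 / 2)) Filter.atTop (nhds 0) := by
    rw [show (0:ℝ) = -0 by ring]
    apply Filter.Tendsto.neg
    apply Real.tendsto_exp_atBot.comp
    have h := (Filter.tendsto_pow_atTop (two_ne_zero)).const_mul_atTop_of_neg
      (by norm_num : (-(1/2) : ℝ) < 0)
    have he : (fun x : ℝ => -(1/2) * x ^ 2) = fun y : ℝ => -y ^ 2 / 2 := by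
      funext y; ring
    rwa [he] at h
  have hint : IntegrableOn (fun x : ℝ => x * Real.exp (-x ^ 2 / 2)) (Set.Ioi 0) := by
    have h := (integrable_mul_exp_neg_mul_sq (by norm_num : (0:ℝ) < 1/2)).integrableOn
      (s := Set.Ioi (0:ℝ))
    have he : (fun x : ℝ => x * Real.exp (-(1/2) * x ^ 2))
        = fun x : ℝ => x * Real.exp (-x ^ 2 / 2) := by
      funext x; ring_nf
    rwa [he] at h
  have := integral_Ioi_of_hasDerivAt_of_tendsto' (a := 0)
    (fun x _ => A x) hint B
  rw [this]
  norm_num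

lemma integral_abs_pdf_le : ∫ x : ℝ, |x| * gaussianPDFReal 0 1 x ≤ 1 := by
  have h1 : (fun x : ℝ => |x| * gaussianPDFReal 0 1 x)
      = fun x : ℝ => (Real.sqrt (2 * π))⁻¹ * (|x| * Real.exp (-x ^ 2 / 2)) := by
    funext x; rw [pdf_eq]; ring
  rw [h1, integral_const_mul]
  have h2 : ∫ x : ℝ, |x| * Real.exp (-x ^ 2 / 2) = 2 := by
    have h3 : (fun x : ℝ => |x| * Real.exp (-x ^ 2 / 2))
        = fun x : ℝ => (fun t : ℝ => t * Real.exp (-t ^ 2 / 2)) |x| := by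
      funext x; simp [sq_abs]
    rw [h3, integral_comp_abs (f := fun t : ℝ => t * Real.exp (-t ^ 2 / 2)),
      integral_Ioi_mul_exp]
    norm_num
  rw [h2]
  nlinarith [sqrt2pi_ge_two, inv_sqrt2pi_le]

lemma lintegral_abs_le : ∫⁻ x, ENNReal.ofReal |x| ∂(gaussianReal 0 1) ≤ 1 := by
  rw [gaussianReal_of_var_ne_zero 0 one_ne_zero,
    lintegral_withDensity_eq_lintegral_mul _ (measurable_gaussianPDF 0 1)
      (measurable_abs.ennreal_ofReal)]
  have h1 : ∀ x : ℝ, (gaussianPDF 0 1 * fun x => ENNReal.ofReal |x|) x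
      = ENNReal.ofReal (|x| * gaussianPDFReal 0 1 x) := by
    intro x
    simp only [Pi.mul_apply, gaussianPDF]
    rw [ENNReal.ofReal_mul (abs_nonneg x), mul_comm]
  rw [lintegral_congr h1]
  have hint : Integrable (fun x : ℝ => |x| * gaussianPDFReal 0 1 x) := by
    have h : (fun x : ℝ => |x| * gaussianPDFReal 0 1 x)
        = fun x : ℝ => (Real.sqrt (2 * π))⁻¹ * (|x| * Real.exp (-x ^ 2 / 2)) := by
      funext x; rw [pdf_eq]; ring
    rw [h]
    exact integrable_abs_exp.const_mul _
  rw [← ofReal_integral_eq_lintegral_ofReal hint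
    (Filter.Eventually.of_forall fun x => mul_nonneg (abs_nonneg x) (gaussianPDFReal_nonneg 0 1 x))]
  calc ENNReal.ofReal (∫ x : ℝ, |x| * gaussianPDFReal 0 1 x)
      ≤ ENNReal.ofReal 1 := ENNReal.ofReal_le_ofReal integral_abs_pdf_le
    _ = 1 := ENNReal.ofReal_one


/-- `Lam ρ u`: for independent standard normals `x, z`, the probability that
`x ≤ u` and `ρ·x + √(1-ρ²)·z ≤ u`.  With `Φ(u) = μ` this is `Λ_ρ(μ)`. -/
noncomputable def Lam (ρ u : ℝ) : ℝ :=
  (((gaussianReal 0 1).prod (gaussianReal 0 1))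
    {p | p.1 ≤ u ∧ ρ * p.1 + Real.sqrt (1 - ρ ^ 2) * p.2 ≤ u}).toReal

lemma Lam_le {ρ u : ℝ} (hρ0 : 0 ≤ ρ) (hρ : ρ ≤ 1/2) :
    Lam ρ u ≤ stdPhi u ^ 2 + ρ ^ 2 + ρ := by
  set γ := gaussianReal 0 1 with hγ
  set s : ℝ := Real.sqrt (1 - ρ ^ 2) with hs_def
  have hsq : s ^ 2 = 1 - ρ ^ 2 := Real.sq_sqrt (by nlinarith)
  have hs0 : 0 < s := by nlinarith [Real.sqrt_nonneg (1 - ρ^2)]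
  set E : Set (ℝ × ℝ) := {p | p.1 ≤ u ∧ ρ * p.1 + s * p.2 ≤ u} with hE_def
  have hE : MeasurableSet E := by
    have : E = {p : ℝ × ℝ | p.1 ≤ u} ∩ {p : ℝ × ℝ | ρ * p.1 + s * p.2 ≤ u} := rfl
    rw [this]
    exact (measurableSet_le measurable_fst measurable_const).inter
      (measurableSet_le (by fun_prop) measurable_const)
  have hprod : (γ.prod γ) E = ∫⁻ x, γ (Prod.mk x ⁻¹' E) ∂γ := Measure.prod_apply hE
  have hbound : ∀ x : ℝ, γ (Prod.mk x ⁻¹' E)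
      ≤ Set.indicator (Set.Iic u) (fun _ => γ (Set.Iic u)) x
        + ENNReal.ofReal (ρ ^ 2 + ρ * |x|) := by
    intro x
    by_cases hx : x ≤ u
    · have hpre : Prod.mk x ⁻¹' E = Set.Iic ((u - ρ * x) / s) := by
        ext z
        simp only [Set.mem_preimage, hE_def, Set.mem_setOf_eq, Set.mem_Iic]
        constructor
        · rintro ⟨-, h2⟩
          rw [le_div_iff₀ hs0]
          linarith [mul_comm s z]
        · intro h
          refine ⟨hx, ?_⟩
          rw [le_div_iff₀ hs0] at h
          linarith [mul_comm s z]
      rw [hpre, Set.indicator_of_mem (Set.mem_Iic.2 hx)]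
      have h1 : γ (Set.Iic ((u - ρ * x) / s)) = ENNReal.ofReal (stdPhi ((u - ρ * x) / s)) :=
        (ENNReal.ofReal_toReal (measure_ne_top _ _)).symm
      have h2 : γ (Set.Iic u) = ENNReal.ofReal (stdPhi u) :=
        (ENNReal.ofReal_toReal (measure_ne_top _ _)).symm
      rw [h1, h2]
      calc ENNReal.ofReal (stdPhi ((u - ρ * x) / s))
          ≤ ENNReal.ofReal (stdPhi u + (ρ ^ 2 + ρ * |x|)) := by
            apply ENNReal.ofReal_le_ofReal
            have := key_pointwise (u := u) (x := x) hρ0 hρ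
            rw [← hs_def] at this
            linarith
        _ ≤ ENNReal.ofReal (stdPhi u) + ENNReal.ofReal (ρ ^ 2 + ρ * |x|) :=
            ENNReal.ofReal_add_le
    · have hpre : Prod.mk x ⁻¹' E = ∅ := by
        ext z
        simp only [Set.mem_preimage, hE_def, Set.mem_setOf_eq, Set.mem_empty_iff_false,
          iff_false, not_and]
        intro h; exact absurd h hx
      rw [hpre]
      simp
  have hmono := lintegral_mono (μ := γ) hbound
  have hsplit : ∫⁻ x, (Set.indicator (Set.Iic u) (fun _ => γ (Set.Iic u)) x
        + ENNReal.ofReal (ρ ^ 2 + ρ * |x|)) ∂γ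
      = γ (Set.Iic u) * γ (Set.Iic u) + ∫⁻ x, ENNReal.ofReal (ρ ^ 2 + ρ * |x|) ∂γ := by
    rw [lintegral_add_left ((measurable_const.indicator measurableSet_Iic))]
    congr 1
    rw [lintegral_indicator measurableSet_Iic, setLIntegral_const, mul_comm]
  have hsecond : ∫⁻ x, ENNReal.ofReal (ρ ^ 2 + ρ * |x|) ∂γ
      ≤ ENNReal.ofReal (ρ ^ 2) + ENNReal.ofReal ρ := by
    have heq : ∀ x : ℝ, ENNReal.ofReal (ρ ^ 2 + ρ * |x|)
        = ENNReal.ofReal (ρ ^ 2) + ENNReal.ofReal ρ * ENNReal.ofReal |x| := by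
      intro x
      rw [ENNReal.ofReal_add (sq_nonneg ρ) (mul_nonneg hρ0 (abs_nonneg x)),
        ENNReal.ofReal_mul hρ0]
    rw [lintegral_congr heq,
      lintegral_add_left measurable_const,
      lintegral_const_mul _ (measurable_abs.ennreal_ofReal),
      lintegral_const]
    have h1 : γ Set.univ = 1 := measure_univ
    rw [h1, mul_one]
    exact add_le_add_right (by
      calc ENNReal.ofReal ρ * ∫⁻ x, ENNReal.ofReal |x| ∂γ
          ≤ ENNReal.ofReal ρ * 1 := mul_le_mul_right lintegral_abs_le _
        _ = ENNReal.ofReal ρ := mul_one _) _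
  have htotal : (γ.prod γ) E ≤ ENNReal.ofReal (stdPhi u) * ENNReal.ofReal (stdPhi u)
      + (ENNReal.ofReal (ρ ^ 2) + ENNReal.ofReal ρ) := by
    rw [hprod]
    refine le_trans hmono ?_
    rw [hsplit]
    have h2 : γ (Set.Iic u) = ENNReal.ofReal (stdPhi u) :=
      (ENNReal.ofReal_toReal (measure_ne_top _ _)).symm
    rw [h2]
    exact add_le_add_right hsecond _
  have hLam : Lam ρ u = ((γ.prod γ) E).toReal := rfl
  rw [hLam]
  calc ((γ.prod γ) E).toReal
      ≤ (ENNReal.ofReal (stdPhi u) * ENNReal.ofReal (stdPhi u)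
        + (ENNReal.ofReal (ρ ^ 2) + ENNReal.ofReal ρ)).toReal := by
        apply ENNReal.toReal_mono _ htotal
        finiteness
    _ = stdPhi u ^ 2 + ρ ^ 2 + ρ := by
        have h0 : 0 ≤ stdPhi u := ENNReal.toReal_nonneg
        rw [← ENNReal.ofReal_mul h0, ENNReal.toReal_add, ENNReal.toReal_add,
          ENNReal.toReal_ofReal (by positivity), ENNReal.toReal_ofReal (sq_nonneg ρ),
          ENNReal.toReal_ofReal hρ0]
        · ring
        all_goals finiteness

/-- There is `ρ₀ > 0` such that for `0 ≤ ρ ≤ ρ₀` and `0 < μ < 1`, `Λ_ρ(μ) ≤ μ² + 3ρ`. -/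
theorem stmt_9 :
    ∃ ρ₀ : ℝ, 0 < ρ₀ ∧
      ∀ ρ : ℝ, 0 ≤ ρ → ρ ≤ ρ₀ →
        ∀ μ : ℝ, 0 < μ → μ < 1 →
          ∀ u : ℝ, stdPhi u = μ → Lam ρ u ≤ μ ^ 2 + 3 * ρ := by
  refine ⟨1/2, by norm_num, fun ρ hρ0 hρ μ hμ0 hμ1 u hu => ?_⟩
  have h := Lam_le (u := u) hρ0 hρ
  rw [hu] at h
  nlinarith
end

section
/- For every integer k ≥ 6 there exists a k² × k² real matrix T, with rows and columns indexed by pairs (x₁,x₂) ∈ [k] × [k], such that: T is symmetric; all entries of T are nonnegative integer multiples of 1/((k-1)(k-2)(k-3)); every row of T sums to 1; T((x₁,x₂),(y₁,y₂)) = 0 whenever {x₁,x₂} ∩ {y₁,y₂} ≠ ∅ (colourfulness); and for every vector v ∈ ℝ^{k²} with ∑ v = 0, ‖T·v‖₂ ≤ (4/(k-1))·‖v‖₂ (i.e. the spectral radius of T is at most 4/(k-1)). -/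
open Finset



noncomputable def aT (k : ℕ) : ℝ := 1/(((k:ℝ)-1)*((k:ℝ)-3))
noncomputable def bT (k : ℕ) : ℝ := 1/(((k:ℝ)-1)*((k:ℝ)-2))

noncomputable def Tm (k : ℕ) : Matrix (Fin k × Fin k) (Fin k × Fin k) ℝ :=
  fun x y => if x.1 = y.1 ∨ x.1 = y.2 ∨ x.2 = y.1 ∨ x.2 = y.2 then 0
    else if x.1 = x.2 then (if y.1 = y.2 then 0 else bT k)
    else if y.1 = y.2 then bT k else aT k

lemma Tm_symm (k : ℕ) : (Tm k).IsSymm := by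
  ext x y
  simp only [Matrix.transpose_apply, Tm]
  split_ifs <;> first | rfl | tauto

lemma sum_erase_two {k : ℕ} {x1 x2 : Fin k} (hx : x1 ≠ x2) (F : Fin k → ℝ) :
    ∑ t, (if t = x1 ∨ t = x2 then 0 else F t) = (∑ t, F t) - F x1 - F x2 := by
  have h : ∀ t, (if t = x1 ∨ t = x2 then (0:ℝ) else F t)
      = F t - (if t = x1 then F t else 0) - (if t = x2 then F t else 0) := by
    intro t
    by_cases h1 : t = x1 <;> by_cases h2 : t = x2 <;> simp_all <;> ring
  simp_rw [h, Finset.sum_sub_distrib, Finset.sum_ite_eq', Finset.mem_univ, if_true]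

lemma sum_erase_one {k : ℕ} (x1 : Fin k) (F : Fin k → ℝ) :
    ∑ t, (if t = x1 then 0 else F t) = (∑ t, F t) - F x1 := by
  have h : ∀ t, (if t = x1 then (0:ℝ) else F t)
      = F t - (if t = x1 then F t else 0) := by
    intro t; by_cases h1 : t = x1 <;> simp_all
  simp_rw [h, Finset.sum_sub_distrib, Finset.sum_ite_eq', Finset.mem_univ, if_true]

lemma sum_pair {k : ℕ} (w : Fin k × Fin k → ℝ) :
    ∑ x : Fin k × Fin k, w x = ∑ u, ∑ t, w (u, t) := by
  exact Fintype.sum_prod_type _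

lemma sum_diag {k : ℕ} (F : Fin k × Fin k → ℝ) :
    ∑ x : Fin k × Fin k, (if x.1 = x.2 then F x else 0) = ∑ u, F (u,u) := by
  rw [sum_pair]
  congr 1; ext u
  simp_rw [eq_comm (a := u)]
  simp [Finset.sum_ite_eq']

lemma sum_swap' {k : ℕ} (w : Fin k × Fin k → ℝ) :
    ∑ x : Fin k × Fin k, w (x.2, x.1) = ∑ x, w x := by
  exact Fintype.sum_equiv (Equiv.prodComm _ _) _ _ (fun x => rfl)

lemma sum_fst {k : ℕ} (g : Fin k → ℝ) (w : Fin k × Fin k → ℝ) :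
    ∑ x : Fin k × Fin k, g x.1 * w x = ∑ u, g u * ∑ t, w (u,t) := by
  rw [sum_pair (fun x => g x.1 * w x)]
  congr 1; ext u; rw [Finset.mul_sum]

lemma sum_snd {k : ℕ} (g : Fin k → ℝ) (w : Fin k × Fin k → ℝ) :
    ∑ x : Fin k × Fin k, g x.2 * w x = ∑ u, g u * ∑ t, w (t,u) := by
  have h2 := sum_fst g (fun x => w (x.2,x.1))
  have h1 : ∑ x : Fin k × Fin k, g x.1 * w (x.2, x.1) = ∑ x : Fin k × Fin k, g x.2 * w x :=
    Fintype.sum_equiv (Equiv.prodComm _ _) _ _ (fun x => rfl)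
  rw [← h1, h2]


lemma master {k : ℕ} (f : Fin k × Fin k → ℝ) (x : Fin k × Fin k) :
    ∑ y, Tm k x y * f y =
      if x.1 = x.2 then
        bT k * ((∑ y, f y) - (∑ t, f (x.1, t)) - (∑ t, f (t, x.1))
          + 2 * f (x.1, x.1) - (∑ u, f (u,u)))
      else
        aT k * ((∑ y, f y) - (∑ t, f (x.1, t)) - (∑ t, f (t, x.1))
            - (∑ t, f (x.2, t)) - (∑ t, f (t, x.2))
            + f (x.1, x.2) + f (x.2, x.1) + 2 * f (x.1, x.1) + 2 * f (x.2, x.2)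
            - (∑ u, f (u,u)))
          + bT k * ((∑ u, f (u,u)) - f (x.1,x.1) - f (x.2,x.2)) := by
  obtain ⟨x1, x2⟩ := x
  rw [sum_pair (fun y => Tm k (x1,x2) y * f y)]
  by_cases hx : x1 = x2
  · subst hx
    simp only [eq_self_iff_true, if_true]
    have hpt : ∀ y1 y2 : Fin k, Tm k (x1,x1) (y1,y2) * f (y1,y2) =
        if y1 = x1 then 0 else if y2 = x1 then 0 else
          (bT k * f (y1,y2) - (if y1 = y2 then bT k * f (y1,y2) else 0)) := by
      intro y1 y2
      by_cases h1 : y1 = x1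
      · rw [if_pos h1]; subst h1; simp [Tm]
      · rw [if_neg h1]
        by_cases h2 : y2 = x1
        · rw [if_pos h2]; subst h2; simp [Tm]
        · rw [if_neg h2]
          have hc : ¬(x1 = y1 ∨ x1 = y2 ∨ x1 = y1 ∨ x1 = y2) := by
            push_neg
            exact ⟨fun h => h1 h.symm, fun h => h2 h.symm, fun h => h1 h.symm,
              fun h => h2 h.symm⟩
          simp only [Tm, hc, if_false, if_neg hc, if_pos rfl, if_true]
          by_cases h3 : y1 = y2 <;> simp only [if_pos, if_neg, h3, if_true, if_false] <;> ring
    simp_rw [hpt]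
    have hinner : ∀ y1 : Fin k,
        (if y1 = x1 then (0:ℝ) else ∑ y2, (if y2 = x1 then 0 else
          (bT k * f (y1,y2) - (if y1 = y2 then bT k * f (y1,y2) else 0)))) =
        (if y1 = x1 then 0 else
          (bT k * (∑ t, f (y1,t)) - bT k * f (y1,y1) - bT k * f (y1,x1))) := by
      intro y1
      by_cases h1 : y1 = x1
      · simp [h1]
      · rw [if_neg h1, if_neg h1]
        rw [sum_erase_one x1 (fun y2 => bT k * f (y1,y2) - (if y1 = y2 then bT k * f (y1,y2) else 0))]
        rw [Finset.sum_sub_distrib, ← Finset.mul_sum]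
        rw [Finset.sum_ite_eq Finset.univ y1 (fun y2 => bT k * f (y1,y2))]
        simp only [Finset.mem_univ, if_true, if_neg h1]
        ring
    -- outer sum: first reintroduce the outer guard
    have hguard : ∀ y1 : Fin k, (∑ y2, (if y1 = x1 then (0:ℝ) else if y2 = x1 then 0 else
          (bT k * f (y1,y2) - (if y1 = y2 then bT k * f (y1,y2) else 0)))) =
        (if y1 = x1 then 0 else
          (bT k * (∑ t, f (y1,t)) - bT k * f (y1,y1) - bT k * f (y1,x1))) := by
      intro y1
      rw [← hinner y1]
      by_cases h1 : y1 = x1 <;> simp [h1]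
    simp_rw [hguard]
    rw [sum_erase_one x1 (fun y1 => bT k * (∑ t, f (y1,t)) - bT k * f (y1,y1) - bT k * f (y1,x1))]
    rw [Finset.sum_sub_distrib, Finset.sum_sub_distrib, ← Finset.mul_sum, ← Finset.mul_sum,
      ← Finset.mul_sum, ← sum_pair f]
    ring
  · rw [if_neg hx]
    have hpt : ∀ y1 y2 : Fin k, Tm k (x1,x2) (y1,y2) * f (y1,y2) =
        if y1 = x1 ∨ y1 = x2 then 0 else if y2 = x1 ∨ y2 = x2 then 0 else
          (aT k * f (y1,y2) + (if y1 = y2 then (bT k - aT k) * f (y1,y2) else 0)) := by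
      intro y1 y2
      by_cases h1 : y1 = x1 ∨ y1 = x2
      · rw [if_pos h1]
        rcases h1 with h|h <;> subst h <;> simp [Tm]
      · rw [if_neg h1]
        push_neg at h1
        by_cases h2 : y2 = x1 ∨ y2 = x2
        · rw [if_pos h2]
          rcases h2 with h|h <;> subst h <;> simp [Tm]
        · rw [if_neg h2]
          push_neg at h2
          have hc : ¬(x1 = y1 ∨ x1 = y2 ∨ x2 = y1 ∨ x2 = y2) := by
            push_neg
            exact ⟨fun h => h1.1 h.symm, fun h => h2.1 h.symm, fun h => h1.2 h.symm,
              fun h => h2.2 h.symm⟩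
          simp only [Tm, if_neg hc, if_neg hx, if_true, if_false]
          by_cases h3 : y1 = y2 <;> simp only [h3, if_true, if_false, if_pos, if_neg] <;> ring
    simp_rw [hpt]
    have hguard : ∀ y1 : Fin k, (∑ y2, (if y1 = x1 ∨ y1 = x2 then (0:ℝ) else
          if y2 = x1 ∨ y2 = x2 then 0 else
          (aT k * f (y1,y2) + (if y1 = y2 then (bT k - aT k) * f (y1,y2) else 0)))) =
        (if y1 = x1 ∨ y1 = x2 then 0 else
          (aT k * (∑ t, f (y1,t)) + (bT k - aT k) * f (y1,y1)
            - aT k * f (y1,x1) - aT k * f (y1,x2))) := by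
      intro y1
      by_cases h1 : y1 = x1 ∨ y1 = x2
      · simp [h1]
      · simp only [if_neg h1]
        push_neg at h1
        rw [sum_erase_two hx (fun y2 => aT k * f (y1,y2)
          + (if y1 = y2 then (bT k - aT k) * f (y1,y2) else 0))]
        rw [Finset.sum_add_distrib, ← Finset.mul_sum]
        rw [Finset.sum_ite_eq Finset.univ y1 (fun y2 => (bT k - aT k) * f (y1,y2))]
        simp only [Finset.mem_univ, if_true, if_neg h1.1, if_neg h1.2]
        ring
    simp_rw [hguard]
    rw [sum_erase_two hx (fun y1 => aT k * (∑ t, f (y1,t)) + (bT k - aT k) * f (y1,y1)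
      - aT k * f (y1,x1) - aT k * f (y1,x2))]
    rw [Finset.sum_sub_distrib, Finset.sum_sub_distrib, Finset.sum_add_distrib,
      ← Finset.mul_sum, ← Finset.mul_sum, ← Finset.mul_sum, ← Finset.mul_sum, ← sum_pair f]
    ring


lemma quad_nonneg {A B C X Y Z : ℝ} (hA : 0 ≤ A) (hC : 0 ≤ C) (hD : B^2 ≤ A*C)
    (hX : 0 ≤ X) (hZ : 0 ≤ Z) (hY : Y^2 ≤ X*Z) : 0 ≤ A*X + 2*B*Y + C*Z := by
  have hu : 0 ≤ A*X + C*Z := add_nonneg (mul_nonneg hA hX) (mul_nonneg hC hZ)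
  have h1 : (2*B*Y)^2 ≤ (A*X + C*Z)^2 := by
    nlinarith [sq_nonneg (A*X - C*Z), mul_le_mul hD hY (sq_nonneg Y) (mul_nonneg hA hC)]
  nlinarith [h1, hu]



section Defs
variable (k : ℕ) (v : Fin k × Fin k → ℝ)

noncomputable def Rr : Fin k → ℝ := fun u => ∑ t, v (u,t)
noncomputable def Cl : Fin k → ℝ := fun u => ∑ t, v (t,u)
noncomputable def De : ℝ := ∑ u, v (u,u)
noncomputable def gg1 : Fin k → ℝ := fun u =>
  (Rr k v u + Cl k v u - 2*(v (u,u) - De k v/(k:ℝ))) / (2*(k:ℝ)-4)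
noncomputable def gg2 : Fin k → ℝ := fun u => (v (u,u) - De k v/(k:ℝ)) - 2*gg1 k v u
noncomputable def pp : ℝ := -De k v/((k:ℝ)*((k:ℝ)-1))
noncomputable def qq : ℝ := -(k:ℝ)*pp k v
noncomputable def fA : Fin k × Fin k → ℝ := fun x => pp k v + (if x.1 = x.2 then qq k v else 0)
noncomputable def fB : Fin k × Fin k → ℝ := fun x =>
  gg1 k v x.1 + gg1 k v x.2 + (if x.1 = x.2 then gg2 k v x.1 else 0)
noncomputable def fC : Fin k × Fin k → ℝ := fun x => v x - fA k v x - fB k v x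
noncomputable def GG1 : Fin k → ℝ := fun u =>
  (-2/((k:ℝ)-2)) * gg1 k v u + (-1/(((k:ℝ)-1)*((k:ℝ)-2))) * gg2 k v u
noncomputable def GG2 : Fin k → ℝ := fun u =>
  (2*(k:ℝ)/(((k:ℝ)-1)*((k:ℝ)-2))) * gg1 k v u + (2/(((k:ℝ)-1)*((k:ℝ)-2))) * gg2 k v u
noncomputable def WA : Fin k × Fin k → ℝ := fun x => (-1/((k:ℝ)-1)) * fA k v x
noncomputable def WB : Fin k × Fin k → ℝ := fun x =>
  GG1 k v x.1 + GG1 k v x.2 + (if x.1 = x.2 then GG2 k v x.1 else 0)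
noncomputable def EE : Fin k × Fin k → ℝ := fun x => aT k * (fC k v x + fC k v (x.2, x.1))

end Defs

section Shape
variable {k : ℕ}

lemma sum_shapeA (p q : ℝ) (w : Fin k × Fin k → ℝ) :
    ∑ x : Fin k × Fin k, (p + (if x.1 = x.2 then q else 0)) * w x
      = p * (∑ x, w x) + q * (∑ u, w (u,u)) := by
  have h : ∀ x : Fin k × Fin k, (p + (if x.1 = x.2 then q else 0)) * w x
      = p * w x + (if x.1 = x.2 then q * w x else 0) := by
    intro x; split_ifs <;> ring
  simp_rw [h]
  rw [Finset.sum_add_distrib, ← Finset.mul_sum, sum_diag (fun x => q * w x), ← Finset.mul_sum]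

lemma sum_shapeB (γ1 γ2 : Fin k → ℝ) (w : Fin k × Fin k → ℝ) :
    ∑ x : Fin k × Fin k, (γ1 x.1 + γ1 x.2 + (if x.1 = x.2 then γ2 x.1 else 0)) * w x
      = (∑ u, γ1 u * (∑ t, w (u,t))) + (∑ u, γ1 u * (∑ t, w (t,u)))
        + ∑ u, γ2 u * w (u,u) := by
  have h : ∀ x : Fin k × Fin k, (γ1 x.1 + γ1 x.2 + (if x.1 = x.2 then γ2 x.1 else 0)) * w x
      = γ1 x.1 * w x + γ1 x.2 * w x + (if x.1 = x.2 then γ2 x.1 * w x else 0) := by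
    intro x; split_ifs <;> ring
  simp_rw [h]
  rw [Finset.sum_add_distrib, Finset.sum_add_distrib, sum_fst, sum_snd,
    sum_diag (fun x => γ2 x.1 * w x)]

lemma row_shapeB (γ1 γ2 : Fin k → ℝ) (h1 : ∑ u, γ1 u = 0) (u : Fin k) :
    ∑ t, (γ1 u + γ1 t + (if u = t then γ2 u else 0)) = (k:ℝ) * γ1 u + γ2 u := by
  rw [Finset.sum_add_distrib, Finset.sum_add_distrib, h1, Finset.sum_const,
    Finset.sum_ite_eq Finset.univ u (fun _ => γ2 u)]
  simp [mul_comm]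

lemma col_shapeB (γ1 γ2 : Fin k → ℝ) (h1 : ∑ u, γ1 u = 0) (u : Fin k) :
    ∑ t, (γ1 t + γ1 u + (if t = u then γ2 t else 0)) = (k:ℝ) * γ1 u + γ2 u := by
  rw [Finset.sum_add_distrib, Finset.sum_add_distrib, h1, Finset.sum_const,
    Finset.sum_ite_eq' Finset.univ u (fun t => γ2 t)]
  simp [mul_comm]

lemma row_shapeA (p q : ℝ) (u : Fin k) :
    ∑ t : Fin k, (p + (if u = t then q else 0)) = (k:ℝ) * p + q := by
  rw [Finset.sum_add_distrib, Finset.sum_const, Finset.sum_ite_eq Finset.univ u (fun _ => q)]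
  simp [mul_comm]

lemma col_shapeA (p q : ℝ) (u : Fin k) :
    ∑ t : Fin k, (p + (if t = u then q else 0)) = (k:ℝ) * p + q := by
  rw [Finset.sum_add_distrib, Finset.sum_const, Finset.sum_ite_eq' Finset.univ u (fun _ => q)]
  simp [mul_comm]

end Shape

lemma Tm_entries {k : ℕ} (hk : 6 ≤ k) (x y : Fin k × Fin k) :
    ∃ m : ℕ, Tm k x y = (m : ℝ) / (((k : ℝ) - 1) * ((k : ℝ) - 2) * ((k : ℝ) - 3)) := by
  have hK : (6:ℝ) ≤ (k:ℝ) := by exact_mod_cast hk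
  have h1 : ((k:ℝ) - 1) ≠ 0 := by linarith
  have h2 : ((k:ℝ) - 2) ≠ 0 := by linarith
  have h3 : ((k:ℝ) - 3) ≠ 0 := by linarith
  have hc2 : ((k - 2 : ℕ) : ℝ) = (k:ℝ) - 2 := by
    have : 2 ≤ k := by omega
    push_cast [this]; ring
  have hc3 : ((k - 3 : ℕ) : ℝ) = (k:ℝ) - 3 := by
    have : 3 ≤ k := by omega
    push_cast [this]; ring
  unfold Tm
  split_ifs
  · exact ⟨0, by simp⟩
  · exact ⟨0, by simp⟩
  · refine ⟨k - 3, ?_⟩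
    rw [hc3, bT]
    field_simp
    try ring
  · refine ⟨k - 3, ?_⟩
    rw [hc3, bT]
    field_simp
    try ring
  · refine ⟨k - 2, ?_⟩
    rw [hc2, aT]
    field_simp
    try ring

lemma Tm_rowsum {k : ℕ} (hk : 6 ≤ k) (x : Fin k × Fin k) : ∑ y, Tm k x y = 1 := by
  have hK : (6:ℝ) ≤ (k:ℝ) := by exact_mod_cast hk
  have h1 : ((k:ℝ) - 1) ≠ 0 := by linarith
  have h2 : ((k:ℝ) - 2) ≠ 0 := by linarith
  have h3 : ((k:ℝ) - 3) ≠ 0 := by linarith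
  have hm := master (k := k) (fun _ => (1:ℝ)) x
  simp only [mul_one] at hm
  rw [hm]
  have hs1 : ∑ _y : Fin k × Fin k, (1:ℝ) = (k:ℝ) * (k:ℝ) := by
    rw [Finset.sum_const, Finset.card_univ]
    simp [Fintype.card_prod]; try ring
  have hs2 : ∑ _t : Fin k, (1:ℝ) = (k:ℝ) := by
    rw [Finset.sum_const, Finset.card_univ]; simp
  rw [hs1, hs2]
  split_ifs
  · rw [bT]; field_simp; ring
  · rw [aT, bT]; field_simp; ring

lemma Tm_colourful {k : ℕ} (x y : Fin k × Fin k)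
    (hxy : (({x.1, x.2} : Finset (Fin k)) ∩ ({y.1, y.2} : Finset (Fin k))).Nonempty) :
    Tm k x y = 0 := by
  obtain ⟨z, hz⟩ := hxy
  simp only [Finset.mem_inter, Finset.mem_insert, Finset.mem_singleton] at hz
  have hc : x.1 = y.1 ∨ x.1 = y.2 ∨ x.2 = y.1 ∨ x.2 = y.2 := by
    obtain ⟨h1 | h1, h2 | h2⟩ := hz <;> subst h1 <;> tauto
  simp only [Tm, if_pos hc]
section SpectralLemmas
variable {k : ℕ} {v : Fin k × Fin k → ℝ}

lemma sum_Rr (hv : ∑ x, v x = 0) : ∑ u, Rr k v u = 0 := by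
  simp only [Rr]; rw [← sum_pair v]; exact hv

lemma sum_Cl (hv : ∑ x, v x = 0) : ∑ u, Cl k v u = 0 := by
  simp only [Cl]; rw [Finset.sum_comm, ← sum_pair v]; exact hv

lemma split2 (c1 c2 : ℝ) (w1 w2 : Fin k → ℝ) :
    ∑ u, (c1 * w1 u + c2 * w2 u) = c1 * (∑ u, w1 u) + c2 * (∑ u, w2 u) := by
  rw [Finset.sum_add_distrib, ← Finset.mul_sum, ← Finset.mul_sum]

lemma split3 (c1 c2 c3 : ℝ) (w1 w2 w3 : Fin k → ℝ) :
    ∑ u, (c1 * w1 u + c2 * w2 u + c3 * w3 u)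
      = c1 * (∑ u, w1 u) + c2 * (∑ u, w2 u) + c3 * (∑ u, w3 u) := by
  rw [Finset.sum_add_distrib, Finset.sum_add_distrib, ← Finset.mul_sum, ← Finset.mul_sum,
    ← Finset.mul_sum]

lemma sum_dhat (hk : 6 ≤ k) : ∑ u, (v (u,u) - De k v/(k:ℝ)) = 0 := by
  have hK : (6:ℝ) ≤ (k:ℝ) := by exact_mod_cast hk
  have hK0 : ((k:ℝ)) ≠ 0 := by linarith
  rw [Finset.sum_sub_distrib, Finset.sum_const, Finset.card_univ, Fintype.card_fin,
    nsmul_eq_mul, ← De]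
  field_simp
  ring

lemma sum_gg1 (hk : 6 ≤ k) (hv : ∑ x, v x = 0) : ∑ u, gg1 k v u = 0 := by
  have hK : (6:ℝ) ≤ (k:ℝ) := by exact_mod_cast hk
  simp only [gg1]
  rw [← Finset.sum_div]
  have h : ∑ u, (Rr k v u + Cl k v u - 2*(v (u,u) - De k v/(k:ℝ)))
      = (∑ u, Rr k v u) + (∑ u, Cl k v u) - 2 * (∑ u, (v (u,u) - De k v/(k:ℝ))) := by
    rw [Finset.sum_sub_distrib, Finset.sum_add_distrib, ← Finset.mul_sum]
  rw [h, sum_Rr hv, sum_Cl hv, sum_dhat hk]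
  simp

lemma sum_gg2 (hk : 6 ≤ k) (hv : ∑ x, v x = 0) : ∑ u, gg2 k v u = 0 := by
  simp only [gg2]
  rw [Finset.sum_sub_distrib, sum_dhat hk, ← Finset.mul_sum, sum_gg1 hk hv]
  ring

lemma sum_GG1 (hk : 6 ≤ k) (hv : ∑ x, v x = 0) : ∑ u, GG1 k v u = 0 := by
  simp only [GG1]
  rw [split2, sum_gg1 hk hv, sum_gg2 hk hv]; ring

lemma sum_GG2 (hk : 6 ≤ k) (hv : ∑ x, v x = 0) : ∑ u, GG2 k v u = 0 := by
  simp only [GG2]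
  rw [split2, sum_gg1 hk hv, sum_gg2 hk hv]; ring

lemma dC0 (hk : 6 ≤ k) (u : Fin k) : fC k v (u,u) = 0 := by
  have hK : (6:ℝ) ≤ (k:ℝ) := by exact_mod_cast hk
  have hK0 : ((k:ℝ)) ≠ 0 := by linarith
  have hK1 : ((k:ℝ) - 1) ≠ 0 := by linarith
  have hK4 : (2*(k:ℝ) - 4) ≠ 0 := by linarith
  simp only [fC, fA, fB, gg2, gg1, pp, qq]
  simp only [if_pos rfl, eq_self_iff_true, if_true]
  field_simp
  ring

lemma rowfA (hk : 6 ≤ k) (u : Fin k) : ∑ t, fA k v (u,t) = 0 := by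
  have h : ∀ t, fA k v (u,t) = pp k v + (if u = t then qq k v else 0) := fun t => rfl
  simp_rw [h]
  rw [row_shapeA, qq]
  ring

lemma colfA (hk : 6 ≤ k) (u : Fin k) : ∑ t, fA k v (t,u) = 0 := by
  have h : ∀ t, fA k v (t,u) = pp k v + (if t = u then qq k v else 0) := fun t => rfl
  simp_rw [h]
  rw [col_shapeA, qq]
  ring

lemma rowfB (hk : 6 ≤ k) (hv : ∑ x, v x = 0) (u : Fin k) :
    ∑ t, fB k v (u,t) = (k:ℝ) * gg1 k v u + gg2 k v u := by
  have h : ∀ t, fB k v (u,t) = gg1 k v u + gg1 k v t + (if u = t then gg2 k v u else 0) :=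
    fun t => rfl
  simp_rw [h]
  exact row_shapeB _ _ (sum_gg1 hk hv) u

lemma colfB (hk : 6 ≤ k) (hv : ∑ x, v x = 0) (u : Fin k) :
    ∑ t, fB k v (t,u) = (k:ℝ) * gg1 k v u + gg2 k v u := by
  have h : ∀ t, fB k v (t,u) = gg1 k v t + gg1 k v u + (if t = u then gg2 k v t else 0) :=
    fun t => rfl
  simp_rw [h]
  exact col_shapeB _ _ (sum_gg1 hk hv) u

lemma rowWB (hk : 6 ≤ k) (hv : ∑ x, v x = 0) (u : Fin k) :
    ∑ t, WB k v (u,t) = (k:ℝ) * GG1 k v u + GG2 k v u := by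
  have h : ∀ t, WB k v (u,t) = GG1 k v u + GG1 k v t + (if u = t then GG2 k v u else 0) :=
    fun t => rfl
  simp_rw [h]
  exact row_shapeB _ _ (sum_GG1 hk hv) u

lemma rowfC (hk : 6 ≤ k) (hv : ∑ x, v x = 0) (u : Fin k) :
    ∑ t, fC k v (u,t) = Rr k v u - ((k:ℝ) * gg1 k v u + gg2 k v u) := by
  have h : ∀ t, fC k v (u,t) = v (u,t) - fA k v (u,t) - fB k v (u,t) := fun t => rfl
  simp_rw [h]
  rw [Finset.sum_sub_distrib, Finset.sum_sub_distrib, rowfA hk, rowfB hk hv, ← Rr]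
  ring

lemma colfC (hk : 6 ≤ k) (hv : ∑ x, v x = 0) (u : Fin k) :
    ∑ t, fC k v (t,u) = Cl k v u - ((k:ℝ) * gg1 k v u + gg2 k v u) := by
  have h : ∀ t, fC k v (t,u) = v (t,u) - fA k v (t,u) - fB k v (t,u) := fun t => rfl
  simp_rw [h]
  rw [Finset.sum_sub_distrib, Finset.sum_sub_distrib, colfA hk, colfB hk hv, ← Cl]
  ring

lemma rowcolC (hk : 6 ≤ k) (hv : ∑ x, v x = 0) (u : Fin k) :
    (∑ t, fC k v (u,t)) + (∑ t, fC k v (t,u)) = 0 := by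
  have hK : (6:ℝ) ≤ (k:ℝ) := by exact_mod_cast hk
  have hK0 : ((k:ℝ)) ≠ 0 := by linarith
  have hK4 : (2*(k:ℝ) - 4) ≠ 0 := by linarith
  rw [rowfC hk hv, colfC hk hv]
  simp only [gg2, gg1]
  have hK2 : ((k:ℝ) - 2) ≠ 0 := by linarith
  rw [show (2*(k:ℝ)-4) = 2*((k:ℝ)-2) by ring]
  field_simp
  ring

lemma sum_fA (hk : 6 ≤ k) : ∑ x, fA k v x = 0 := by
  rw [sum_pair (fA k v)]
  simp_rw [rowfA hk]
  simp

lemma sum_fB (hk : 6 ≤ k) (hv : ∑ x, v x = 0) : ∑ x, fB k v x = 0 := by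
  rw [sum_pair (fB k v)]
  simp_rw [rowfB hk hv]
  rw [Finset.sum_add_distrib, ← Finset.mul_sum, sum_gg1 hk hv, sum_gg2 hk hv]
  ring

lemma sum_fC (hk : 6 ≤ k) (hv : ∑ x, v x = 0) : ∑ x, fC k v x = 0 := by
  have h : ∀ x, fC k v x = v x - fA k v x - fB k v x := fun x => rfl
  simp_rw [h]
  rw [Finset.sum_sub_distrib, Finset.sum_sub_distrib, hv, sum_fA hk, sum_fB hk hv]
  ring
lemma dEE0 (hk : 6 ≤ k) (u : Fin k) : EE k v (u,u) = 0 := by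
  have h : EE k v (u,u) = aT k * (fC k v (u,u) + fC k v (u,u)) := rfl
  rw [h, dC0 hk]
  ring

lemma rowEE (hk : 6 ≤ k) (hv : ∑ x, v x = 0) (u : Fin k) : ∑ t, EE k v (u,t) = 0 := by
  have h : ∀ t, EE k v (u,t) = aT k * (fC k v (u,t) + fC k v (t,u)) := fun t => rfl
  simp_rw [h]
  rw [← Finset.mul_sum, Finset.sum_add_distrib, rowcolC hk hv]
  ring

lemma colEE (hk : 6 ≤ k) (hv : ∑ x, v x = 0) (u : Fin k) : ∑ t, EE k v (t,u) = 0 := by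
  have h : ∀ t, EE k v (t,u) = aT k * (fC k v (t,u) + fC k v (u,t)) := fun t => rfl
  simp_rw [h]
  rw [← Finset.mul_sum, Finset.sum_add_distrib]
  have := rowcolC hk hv u
  have h2 : (∑ t, fC k v (t,u)) + (∑ t, fC k v (u,t)) = 0 := by linarith
  rw [h2]; ring

lemma sum_EE (hk : 6 ≤ k) (hv : ∑ x, v x = 0) : ∑ x, EE k v x = 0 := by
  rw [sum_pair (EE k v)]
  simp_rw [rowEE hk hv]
  simp

lemma dB_eq (u : Fin k) : fB k v (u,u) = gg1 k v u + gg1 k v u + gg2 k v u := by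
  simp [fB]

lemma dWB_eq (u : Fin k) : WB k v (u,u) = GG1 k v u + GG1 k v u + GG2 k v u := by
  simp [WB]

lemma X_AB (hk : 6 ≤ k) (hv : ∑ x, v x = 0) : ∑ x, fA k v x * fB k v x = 0 := by
  simp only [fA]
  rw [sum_shapeA, sum_fB hk hv]
  simp_rw [dB_eq]
  rw [Finset.sum_add_distrib, Finset.sum_add_distrib, sum_gg1 hk hv, sum_gg2 hk hv]
  ring

lemma X_AC (hk : 6 ≤ k) (hv : ∑ x, v x = 0) : ∑ x, fA k v x * fC k v x = 0 := by
  simp only [fA]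
  rw [sum_shapeA, sum_fC hk hv]
  simp_rw [dC0 hk]
  simp

lemma X_BC (hk : 6 ≤ k) (hv : ∑ x, v x = 0) : ∑ x, fB k v x * fC k v x = 0 := by
  simp only [fB]
  rw [sum_shapeB (gg1 k v) (gg2 k v) (fC k v)]
  rw [← Finset.sum_add_distrib]
  have h : ∀ u, gg1 k v u * (∑ t, fC k v (u,t)) + gg1 k v u * (∑ t, fC k v (t,u)) = 0 :=
    fun u => by rw [← mul_add, rowcolC hk hv, mul_zero]
  simp_rw [h, dC0 hk]
  simp

lemma X_AWB (hk : 6 ≤ k) (hv : ∑ x, v x = 0) : ∑ x, fA k v x * WB k v x = 0 := by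
  simp only [fA]
  rw [sum_shapeA]
  have hs : ∑ x, WB k v x = 0 := by
    rw [sum_pair (WB k v)]
    simp_rw [rowWB hk hv]
    rw [Finset.sum_add_distrib, ← Finset.mul_sum, sum_GG1 hk hv, sum_GG2 hk hv]
    ring
  rw [hs]
  simp_rw [dWB_eq]
  rw [Finset.sum_add_distrib, Finset.sum_add_distrib, sum_GG1 hk hv, sum_GG2 hk hv]
  ring

lemma X_AEE (hk : 6 ≤ k) (hv : ∑ x, v x = 0) : ∑ x, fA k v x * EE k v x = 0 := by
  simp only [fA]
  rw [sum_shapeA, sum_EE hk hv]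
  simp_rw [dEE0 hk]
  simp

lemma X_WBEE (hk : 6 ≤ k) (hv : ∑ x, v x = 0) : ∑ x, WB k v x * EE k v x = 0 := by
  simp only [WB]
  rw [sum_shapeB (GG1 k v) (GG2 k v) (EE k v)]
  simp_rw [rowEE hk hv, colEE hk hv, dEE0 hk]
  simp

lemma N_v (hk : 6 ≤ k) (hv : ∑ x, v x = 0) :
    ∑ x, v x ^ 2 = (∑ x, fA k v x ^ 2) + (∑ x, fB k v x ^ 2) + (∑ x, fC k v x ^ 2) := by
  have hpt : ∀ x, v x ^ 2 = fA k v x ^ 2 + fB k v x ^ 2 + fC k v x ^ 2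
      + 2 * (fA k v x * fB k v x) + 2 * (fA k v x * fC k v x) + 2 * (fB k v x * fC k v x) := by
    intro x
    have h : fC k v x = v x - fA k v x - fB k v x := rfl
    rw [h]; ring
  simp_rw [hpt]
  rw [Finset.sum_add_distrib, Finset.sum_add_distrib, Finset.sum_add_distrib,
    Finset.sum_add_distrib, Finset.sum_add_distrib,
    ← Finset.mul_sum, ← Finset.mul_sum, ← Finset.mul_sum,
    X_AB hk hv, X_AC hk hv, X_BC hk hv]
  ring

lemma N_fB (hk : 6 ≤ k) (hv : ∑ x, v x = 0) :
    ∑ x, fB k v x ^ 2 = 2*(k:ℝ)*(∑ u, gg1 k v u ^ 2) + 4*(∑ u, gg1 k v u * gg2 k v u)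
      + (∑ u, gg2 k v u ^ 2) := by
  have hpt : ∀ x, fB k v x ^ 2 = fB k v x * fB k v x := fun x => sq (fB k v x) ▸ by ring
  simp_rw [hpt]
  have h0 : ∀ x, fB k v x * fB k v x
      = (gg1 k v x.1 + gg1 k v x.2 + (if x.1 = x.2 then gg2 k v x.1 else 0)) * fB k v x :=
    fun x => rfl
  simp_rw [h0]
  rw [sum_shapeB (gg1 k v) (gg2 k v) (fB k v)]
  simp_rw [rowfB hk hv, colfB hk hv, dB_eq]
  have h1 : ∀ u, gg1 k v u * ((k:ℝ) * gg1 k v u + gg2 k v u)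
      = (k:ℝ) * gg1 k v u ^2 + 1 * (gg1 k v u * gg2 k v u) + 0 * gg2 k v u ^2 := by
    intro u; ring
  have h2 : ∀ u, gg2 k v u * (gg1 k v u + gg1 k v u + gg2 k v u)
      = 0 * gg1 k v u ^2 + 2 * (gg1 k v u * gg2 k v u) + 1 * gg2 k v u ^2 := by
    intro u; ring
  simp_rw [h1, h2]
  rw [split3 ((k:ℝ)) 1 0 (fun u => gg1 k v u ^2) (fun u => gg1 k v u * gg2 k v u)
    (fun u => gg2 k v u ^2), split3 0 2 1 (fun u => gg1 k v u ^2)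
    (fun u => gg1 k v u * gg2 k v u) (fun u => gg2 k v u ^2)]
  ring

lemma N_WB (hk : 6 ≤ k) (hv : ∑ x, v x = 0) :
    ∑ x, WB k v x ^ 2 = 2*(k:ℝ)*(∑ u, GG1 k v u ^ 2) + 4*(∑ u, GG1 k v u * GG2 k v u)
      + (∑ u, GG2 k v u ^ 2) := by
  have hpt : ∀ x, WB k v x ^ 2 = WB k v x * WB k v x := fun x => sq (WB k v x) ▸ by ring
  simp_rw [hpt]
  have h0 : ∀ x, WB k v x * WB k v x
      = (GG1 k v x.1 + GG1 k v x.2 + (if x.1 = x.2 then GG2 k v x.1 else 0)) * WB k v x :=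
    fun x => rfl
  simp_rw [h0]
  rw [sum_shapeB (GG1 k v) (GG2 k v) (WB k v)]
  have hcol : ∀ u, ∑ t, WB k v (t,u) = (k:ℝ) * GG1 k v u + GG2 k v u := by
    intro u
    have h : ∀ t, WB k v (t,u) = GG1 k v t + GG1 k v u + (if t = u then GG2 k v t else 0) :=
      fun t => rfl
    simp_rw [h]
    exact col_shapeB _ _ (sum_GG1 hk hv) u
  simp_rw [rowWB hk hv, hcol, dWB_eq]
  have h1 : ∀ u, GG1 k v u * ((k:ℝ) * GG1 k v u + GG2 k v u)
      = (k:ℝ) * GG1 k v u ^2 + 1 * (GG1 k v u * GG2 k v u) + 0 * GG2 k v u ^2 := by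
    intro u; ring
  have h2 : ∀ u, GG2 k v u * (GG1 k v u + GG1 k v u + GG2 k v u)
      = 0 * GG1 k v u ^2 + 2 * (GG1 k v u * GG2 k v u) + 1 * GG2 k v u ^2 := by
    intro u; ring
  simp_rw [h1, h2]
  rw [split3 ((k:ℝ)) 1 0 (fun u => GG1 k v u ^2) (fun u => GG1 k v u * GG2 k v u)
    (fun u => GG2 k v u ^2), split3 0 2 1 (fun u => GG1 k v u ^2)
    (fun u => GG1 k v u * GG2 k v u) (fun u => GG2 k v u ^2)]
  ring

lemma N_EE (hk : 6 ≤ k) : ∑ x, EE k v x ^ 2 ≤ 4 * aT k ^2 * ∑ x, fC k v x ^ 2 := by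
  have hle : ∀ x : Fin k × Fin k, EE k v x ^ 2
      ≤ 2 * aT k ^2 * (fC k v x ^2 + fC k v (x.2,x.1) ^2) := by
    intro x
    have h : EE k v x = aT k * (fC k v x + fC k v (x.2,x.1)) := rfl
    rw [h]
    nlinarith [mul_nonneg (sq_nonneg (aT k)) (sq_nonneg (fC k v x - fC k v (x.2,x.1)))]
  calc ∑ x, EE k v x ^ 2 ≤ ∑ x, 2 * aT k ^2 * (fC k v x ^2 + fC k v (x.2,x.1) ^2) :=
        Finset.sum_le_sum (fun x _ => hle x)
    _ = 4 * aT k ^2 * ∑ x, fC k v x ^ 2 := by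
        rw [← Finset.mul_sum]
        have h : ∑ x : Fin k × Fin k, (fC k v x ^2 + fC k v (x.2,x.1) ^2)
            = (∑ x, fC k v x ^2) + ∑ x : Fin k × Fin k, fC k v (x.2,x.1) ^2 :=
          Finset.sum_add_distrib
        rw [h, sum_swap' (fun x => fC k v x ^2)]
        ring

lemma N_W (hk : 6 ≤ k) (hv : ∑ x, v x = 0) (x : Fin k × Fin k) :
    (Tm k).mulVec v x = WA k v x + WB k v x + EE k v x := by
  have hK : (6:ℝ) ≤ (k:ℝ) := by exact_mod_cast hk
  have hK0 : ((k:ℝ)) ≠ 0 := by linarith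
  have hK1 : ((k:ℝ) - 1) ≠ 0 := by linarith
  have hK2 : ((k:ℝ) - 2) ≠ 0 := by linarith
  have hK3 : ((k:ℝ) - 3) ≠ 0 := by linarith
  have hK4 : (2*(k:ℝ) - 4) ≠ 0 := by linarith
  have hmv : (Tm k).mulVec v x = ∑ y, Tm k x y * v y := rfl
  rw [hmv, master v x, hv]
  obtain ⟨x1, x2⟩ := x
  dsimp only
  by_cases hx : x1 = x2
  · subst hx
    rw [if_pos rfl]
    have e1 : WA k v (x1,x1) = (-1/((k:ℝ)-1)) * (pp k v + qq k v) := by simp [WA, fA]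
    have e2 : WB k v (x1,x1) = GG1 k v x1 + GG1 k v x1 + GG2 k v x1 := dWB_eq x1
    have e3 : EE k v (x1,x1) = 0 := dEE0 hk x1
    rw [e1, e2, e3]
    simp only [GG1, GG2, gg1, gg2, pp, qq, bT, Rr, Cl, De]
    rw [show (2*(k:ℝ)-4) = 2*((k:ℝ)-2) by ring]
    field_simp
    ring
  · rw [if_neg hx]
    have e1 : WA k v (x1,x2) = (-1/((k:ℝ)-1)) * pp k v := by simp [WA, fA, hx]
    have e2 : WB k v (x1,x2) = GG1 k v x1 + GG1 k v x2 := by simp [WB, hx]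
    have e3 : EE k v (x1,x2) = aT k * ((v (x1,x2) - pp k v - (gg1 k v x1 + gg1 k v x2))
        + (v (x2,x1) - pp k v - (gg1 k v x2 + gg1 k v x1))) := by
      have h : EE k v (x1,x2) = aT k * (fC k v (x1,x2) + fC k v (x2,x1)) := rfl
      have hC1 : fC k v (x1,x2) = v (x1,x2) - pp k v - (gg1 k v x1 + gg1 k v x2) := by
        simp [fC, fA, fB, hx]
      have hC2 : fC k v (x2,x1) = v (x2,x1) - pp k v - (gg1 k v x2 + gg1 k v x1) := by
        have hx' : x2 ≠ x1 := Ne.symm hx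
        simp [fC, fA, fB, hx']
      rw [h, hC1, hC2]
    rw [e1, e2, e3]
    simp only [GG1, gg1, gg2, pp, aT, bT, Rr, Cl, De]
    rw [show (2*(k:ℝ)-4) = 2*((k:ℝ)-2) by ring]
    field_simp
    ring

lemma N_Tv (hk : 6 ≤ k) (hv : ∑ x, v x = 0) :
    ∑ x, ((Tm k).mulVec v x)^2
      = (∑ x, WA k v x ^2) + (∑ x, WB k v x ^2) + (∑ x, EE k v x ^2) := by
  have hpt : ∀ x, ((Tm k).mulVec v x)^2 = WA k v x ^2 + WB k v x ^2 + EE k v x ^2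
      + 2*(WA k v x * WB k v x) + 2*(WA k v x * EE k v x) + 2*(WB k v x * EE k v x) := by
    intro x; rw [N_W hk hv x]; ring
  simp_rw [hpt]
  have c1 : ∀ x, WA k v x * WB k v x = (-1/((k:ℝ)-1)) * (fA k v x * WB k v x) :=
    fun x => by simp only [WA]; ring
  have c2 : ∀ x, WA k v x * EE k v x = (-1/((k:ℝ)-1)) * (fA k v x * EE k v x) :=
    fun x => by simp only [WA]; ring
  simp_rw [c1, c2]
  rw [Finset.sum_add_distrib, Finset.sum_add_distrib, Finset.sum_add_distrib,
    Finset.sum_add_distrib, Finset.sum_add_distrib,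
    ← Finset.mul_sum, ← Finset.mul_sum, ← Finset.mul_sum,
    ← Finset.mul_sum, ← Finset.mul_sum,
    X_AWB hk hv, X_AEE hk hv, X_WBEE hk hv]
  ring

lemma N_WA : ∑ x, WA k v x ^2 = (1/((k:ℝ)-1))^2 * ∑ x, fA k v x ^2 := by
  have h : ∀ x, WA k v x ^2 = (1/((k:ℝ)-1))^2 * fA k v x ^2 := fun x => by
    simp only [WA]; ring
  simp_rw [h]
  rw [← Finset.mul_sum]

set_option maxHeartbeats 2000000 in
lemma spectral (hk : 6 ≤ k) (hv : ∑ x, v x = 0) :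
    ∑ x, ((Tm k).mulVec v x)^2 ≤ (4/((k:ℝ)-1))^2 * ∑ x, v x ^ 2 := by
  have hK : (6:ℝ) ≤ (k:ℝ) := by exact_mod_cast hk
  have hK1 : (0:ℝ) < (k:ℝ) - 1 := by linarith
  have hK2 : (0:ℝ) < (k:ℝ) - 2 := by linarith
  have hK3 : (0:ℝ) < (k:ℝ) - 3 := by linarith
  set K := (k:ℝ) with hKdef
  set X := ∑ u, gg1 k v u ^ 2 with hX
  set Y := ∑ u, gg1 k v u * gg2 k v u with hY
  set Z := ∑ u, gg2 k v u ^ 2 with hZ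
  -- expansions of the G-sums
  have hXG : ∑ u, GG1 k v u ^2 = (-2/(K-2))^2 * X
      + (2*((-2/(K-2))*(-1/((K-1)*(K-2))))) * Y + (-1/((K-1)*(K-2)))^2 * Z := by
    have h : ∀ u, GG1 k v u ^2 = (-2/(K-2))^2 * gg1 k v u ^2
        + (2*((-2/(K-2))*(-1/((K-1)*(K-2))))) * (gg1 k v u * gg2 k v u)
        + (-1/((K-1)*(K-2)))^2 * gg2 k v u ^2 := fun u => by simp only [GG1]; ring
    simp_rw [h]
    rw [split3 _ _ _ (fun u => gg1 k v u ^2) (fun u => gg1 k v u * gg2 k v u)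
      (fun u => gg2 k v u ^2)]
  have hYG : ∑ u, GG1 k v u * GG2 k v u = ((-2/(K-2))*(2*K/((K-1)*(K-2)))) * X
      + ((-2/(K-2))*(2/((K-1)*(K-2))) + (-1/((K-1)*(K-2)))*(2*K/((K-1)*(K-2)))) * Y
      + ((-1/((K-1)*(K-2)))*(2/((K-1)*(K-2)))) * Z := by
    have h : ∀ u, GG1 k v u * GG2 k v u = ((-2/(K-2))*(2*K/((K-1)*(K-2)))) * gg1 k v u ^2
        + ((-2/(K-2))*(2/((K-1)*(K-2))) + (-1/((K-1)*(K-2)))*(2*K/((K-1)*(K-2))))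
          * (gg1 k v u * gg2 k v u)
        + ((-1/((K-1)*(K-2)))*(2/((K-1)*(K-2)))) * gg2 k v u ^2 := fun u => by
      simp only [GG1, GG2]; ring
    simp_rw [h]
    rw [split3 _ _ _ (fun u => gg1 k v u ^2) (fun u => gg1 k v u * gg2 k v u)
      (fun u => gg2 k v u ^2)]
  have hZG : ∑ u, GG2 k v u ^2 = (2*K/((K-1)*(K-2)))^2 * X
      + (2*((2*K/((K-1)*(K-2)))*(2/((K-1)*(K-2))))) * Y + (2/((K-1)*(K-2)))^2 * Z := by
    have h : ∀ u, GG2 k v u ^2 = (2*K/((K-1)*(K-2)))^2 * gg1 k v u ^2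
        + (2*((2*K/((K-1)*(K-2)))*(2/((K-1)*(K-2))))) * (gg1 k v u * gg2 k v u)
        + (2/((K-1)*(K-2)))^2 * gg2 k v u ^2 := fun u => by simp only [GG2]; ring
    simp_rw [h]
    rw [split3 _ _ _ (fun u => gg1 k v u ^2) (fun u => gg1 k v u * gg2 k v u)
      (fun u => gg2 k v u ^2)]
  -- the key 2x2 inequality
  have hXpos : 0 ≤ X := Finset.sum_nonneg (fun u _ => sq_nonneg _)
  have hZpos : 0 ≤ Z := Finset.sum_nonneg (fun u _ => sq_nonneg _)
  have hY2 : Y^2 ≤ X * Z := Finset.sum_mul_sq_le_sq_mul_sq Finset.univ (gg1 k v) (gg2 k v)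
  have haa : (0:ℝ) ≤ 4*K*(6*K-13) := by nlinarith
  have hcc : (0:ℝ) ≤ 2*(8*K-17) := by nlinarith
  have hb2 : (4*(7*K-15))^2 ≤ (4*K*(6*K-13)) * (2*(8*K-17)) := by
    nlinarith [sq_nonneg (K-6), mul_nonneg (mul_nonneg (by linarith : (0:ℝ) ≤ K-6)
      (by linarith : (0:ℝ) ≤ K-6)) (by linarith : (0:ℝ) ≤ K-6)]
  have h0 : 0 ≤ (4*K*(6*K-13))*X + 2*(4*(7*K-15))*Y + (2*(8*K-17))*Z :=
    quad_nonneg haa hcc hb2 hXpos hZpos hY2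
  have hmid : ∑ x, WB k v x ^2 ≤ (4/(K-1))^2 * ∑ x, fB k v x ^2 := by
    rw [N_WB hk hv, N_fB hk hv, hXG, hYG, hZG, ← hX, ← hY, ← hZ]
    have heq : (4/(K-1))^2 * (2*K*X + 4*Y + Z)
        - (2*K*((-2/(K-2))^2 * X + (2*((-2/(K-2))*(-1/((K-1)*(K-2))))) * Y
            + (-1/((K-1)*(K-2)))^2 * Z)
          + 4*(((-2/(K-2))*(2*K/((K-1)*(K-2)))) * X
            + ((-2/(K-2))*(2/((K-1)*(K-2))) + (-1/((K-1)*(K-2)))*(2*K/((K-1)*(K-2)))) * Y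
            + ((-1/((K-1)*(K-2)))*(2/((K-1)*(K-2)))) * Z)
          + ((2*K/((K-1)*(K-2)))^2 * X
            + (2*((2*K/((K-1)*(K-2)))*(2/((K-1)*(K-2))))) * Y + (2/((K-1)*(K-2)))^2 * Z))
        = ((4*K*(6*K-13))*X + 2*(4*(7*K-15))*Y + (2*(8*K-17))*Z) / ((K-1)^2*(K-2)) := by
      field_simp
      ring
    have hq : (0:ℝ) < (K-1)^2*(K-2) := by positivity
    have := div_nonneg h0 hq.le
    linarith
  have hEE2 : ∑ x, EE k v x ^2 ≤ (4/(K-1))^2 * ∑ x, fC k v x ^2 := by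
    have h1 := N_EE (v := v) hk
    have h2 : 4 * aT k ^2 ≤ (4/(K-1))^2 := by
      rw [aT]
      have heq2 : (4/(K-1))^2 - 4*(1/((K-1)*(K-3)))^2
          = (4*(K-3)^2 - 1)*4 / ((K-1)^2*(K-3)^2) := by
        field_simp
      have h3 : (0:ℝ) ≤ (4*(K-3)^2 - 1)*4 / ((K-1)^2*(K-3)^2) := by
        apply div_nonneg _ (by positivity)
        nlinarith [sq_nonneg (K-3)]
      linarith
    have h4 : (0:ℝ) ≤ ∑ x, fC k v x ^2 := Finset.sum_nonneg (fun x _ => sq_nonneg _)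
    calc ∑ x, EE k v x ^2 ≤ 4 * aT k ^2 * ∑ x, fC k v x ^2 := h1
      _ ≤ (4/(K-1))^2 * ∑ x, fC k v x ^2 := by
          apply mul_le_mul_of_nonneg_right h2 h4
  have hWA2 : ∑ x, WA k v x ^2 ≤ (4/(K-1))^2 * ∑ x, fA k v x ^2 := by
    rw [N_WA]
    have h4 : (0:ℝ) ≤ ∑ x, fA k v x ^2 := Finset.sum_nonneg (fun x _ => sq_nonneg _)
    apply mul_le_mul_of_nonneg_right _ h4
    rw [div_pow, div_pow, one_pow]
    apply div_le_div_of_nonneg_right ?_ (by positivity)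
    · nlinarith
  rw [N_Tv hk hv, N_v hk hv]
  have hfb : ∑ x, fB k v x ^2 = 2*K*X + 4*Y + Z := N_fB hk hv
  nlinarith [hmid, hEE2, hWA2]

/-- For every `k ≥ 6` there is a colourful symmetric Markov operator on `[k]×[k]`
whose entries are nonnegative integer multiples of `1/((k-1)(k-2)(k-3))` and whose
spectral radius is at most `4/(k-1)`. -/
theorem stmt_12 (k : ℕ) (hk : 6 ≤ k) :
    ∃ T : Matrix (Fin k × Fin k) (Fin k × Fin k) ℝ,
      T.IsSymm ∧
      (∀ x y, ∃ m : ℕ, T x y = (m : ℝ) / (((k : ℝ) - 1) * ((k : ℝ) - 2) * ((k : ℝ) - 3))) ∧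
      (∀ x, ∑ y, T x y = 1) ∧
      (∀ x y : Fin k × Fin k,
        (({x.1, x.2} : Finset (Fin k)) ∩ ({y.1, y.2} : Finset (Fin k))).Nonempty → T x y = 0) ∧
      (∀ v : Fin k × Fin k → ℝ, ∑ x, v x = 0 →
        Real.sqrt (∑ x, T.mulVec v x ^ 2) ≤ 4 / ((k : ℝ) - 1) * Real.sqrt (∑ x, v x ^ 2)) := by
  have hK : (6:ℝ) ≤ (k:ℝ) := by exact_mod_cast hk
  refine ⟨Tm k, Tm_symm k, fun x y => Tm_entries hk x y, fun x => Tm_rowsum hk x,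
    fun x y h => Tm_colourful x y h, ?_⟩
  intro v hv
  have hμ : (0:ℝ) ≤ 4/((k:ℝ)-1) := by
    apply div_nonneg (by norm_num)
    linarith
  have h := spectral hk hv
  calc Real.sqrt (∑ x, (Tm k).mulVec v x ^2)
      ≤ Real.sqrt ((4/((k:ℝ)-1))^2 * ∑ x, v x ^2) := Real.sqrt_le_sqrt h
    _ = 4/((k:ℝ)-1) * Real.sqrt (∑ x, v x ^2) := by
        rw [Real.sqrt_mul (by positivity), Real.sqrt_sq hμ]
end SpectralLemmas
end

section
/- Let D ≥ 1, r ≥ 1 be integers, let 0 < ρ < 1, and let T be a symmetric D × D real matrix with nonnegative entries whose rows sum to 1, such that ‖T·v‖₂ ≤ ρ·‖v‖₂ for every v ∈ ℝᴰ with ∑ v = 0 (spectral radius at most ρ). Let f : [D]^r → [0,1] and set μ = E_x[f(x)] (x uniform on [D]^r). Then ⟨f, T^{⊗r} f⟩ ≥ μ² - S_ρ(f), where S_ρ(f) = ⟨f, T_ρ^{⊗r} f⟩ is the noise stability of f at rate ρ. -/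
/-- Expectation inner product on functions `[D]^r → ℝ`:
`⟨f,g⟩ = D^{-r} ∑_x f(x)g(x)`. -/
noncomputable def finner (D r : ℕ) (f g : (Fin r → Fin D) → ℝ) : ℝ :=
  (1 / (D : ℝ) ^ r) * ∑ x : Fin r → Fin D, f x * g x

/-- The action of the tensor power `T^{⊗r}` on functions `[D]^r → ℝ`:
`(T^{⊗r} f)(x) = ∑_y (∏_i T (x i) (y i)) f(y)`. -/
noncomputable def tensorAct (D r : ℕ) (T : Matrix (Fin D) (Fin D) ℝ)
    (f : (Fin r → Fin D) → ℝ) : (Fin r → Fin D) → ℝ :=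
  fun x => ∑ y : Fin r → Fin D, (∏ i, T (x i) (y i)) * f y

/-- The Bonami–Beckner operator `T_ρ` on `[D]`. -/
noncomputable def BB (D : ℕ) (ρ : ℝ) : Matrix (Fin D) (Fin D) ℝ :=
  fun x y => if x = y then ρ + (1 - ρ) / D else (1 - ρ) / D

lemma tensorAct_comp (D r : ℕ) (A B : Matrix (Fin D) (Fin D) ℝ) (f : (Fin r → Fin D) → ℝ) :
    tensorAct D r A (tensorAct D r B f) = tensorAct D r (A * B) f := by
  funext x
  simp only [tensorAct, Finset.mul_sum]
  rw [Finset.sum_comm]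
  refine Finset.sum_congr rfl fun z _ => ?_
  have h1 : ∑ y : Fin r → Fin D, (∏ i, A (x i) (y i)) * ((∏ i, B (y i) (z i)) * f z)
      = (∑ y : Fin r → Fin D, ∏ i, A (x i) (y i) * B (y i) (z i)) * f z := by
    rw [Finset.sum_mul]
    refine Finset.sum_congr rfl fun y _ => ?_
    rw [Finset.prod_mul_distrib]; ring
  rw [h1]
  congr 1
  rw [← Fintype.prod_sum (fun (i : Fin r) (k : Fin D) => A (x i) k * B k (z i))]
  exact Finset.prod_congr rfl fun i _ => (Matrix.mul_apply).symm

lemma dot_tensorAct (D r : ℕ) (A : Matrix (Fin D) (Fin D) ℝ) (hA : A.IsSymm)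
    (f g : (Fin r → Fin D) → ℝ) :
    ∑ x : Fin r → Fin D, f x * tensorAct D r A g x
      = ∑ x : Fin r → Fin D, tensorAct D r A f x * g x := by
  simp only [tensorAct, Finset.mul_sum, Finset.sum_mul]
  rw [Finset.sum_comm]
  refine Finset.sum_congr rfl fun y _ => Finset.sum_congr rfl fun x _ => ?_
  have h : ∀ i, A (y i) (x i) = A (x i) (y i) := fun i => hA.apply _ _
  rw [show (∏ i, A (y i) (x i)) = ∏ i, A (x i) (y i) from Finset.prod_congr rfl fun i _ => h i]
  ring

lemma tensorAct_sub (D r : ℕ) (A : Matrix (Fin D) (Fin D) ℝ) (f g : (Fin r → Fin D) → ℝ) :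
    tensorAct D r A (fun x => f x - g x)
      = fun x => tensorAct D r A f x - tensorAct D r A g x := by
  funext x
  simp [tensorAct, mul_sub, Finset.sum_sub_distrib]

lemma tensor_contract (D : ℕ) (A : Matrix (Fin D) (Fin D) ℝ)
    (hA : ∀ v : Fin D → ℝ, ∑ i, (A.mulVec v i) ^ 2 ≤ ∑ i, (v i) ^ 2) (r : ℕ) :
    ∀ g : (Fin r → Fin D) → ℝ,
      ∑ x : Fin r → Fin D, (tensorAct D r A g x) ^ 2 ≤ ∑ x : Fin r → Fin D, (g x) ^ 2 := by
  induction r with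
  | zero =>
    intro g
    have h : ∀ x : Fin 0 → Fin D, tensorAct D 0 A g x = g x := by
      intro x
      simp [tensorAct]
      exact congrArg g (Subsingleton.elim _ _)
    exact le_of_eq (Finset.sum_congr rfl fun x _ => by rw [h x])
  | succ r ih =>
    intro g
    classical
    set e := Fin.consEquiv (fun _ : Fin (r + 1) => Fin D) with he
    have hre : ∀ F : (Fin (r + 1) → Fin D) → ℝ,
        ∑ x : Fin (r + 1) → Fin D, F x
          = ∑ p : Fin D × (Fin r → Fin D), F (Fin.cons p.1 p.2) :=
      fun F => (Fintype.sum_equiv e (fun p => F (Fin.cons p.1 p.2)) F (fun p => rfl)).symm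
    set g1 : Fin D → (Fin r → Fin D) → ℝ :=
      fun b => tensorAct D r A (fun y' => g (Fin.cons b y')) with hg1
    have key : ∀ (a : Fin D) (x' : Fin r → Fin D),
        tensorAct D (r + 1) A g (Fin.cons a x') = ∑ b : Fin D, A a b * g1 b x' := by
      intro a x'
      rw [tensorAct, hre]
      rw [Fintype.sum_prod_type]
      refine Finset.sum_congr rfl fun b _ => ?_
      rw [hg1]
      simp only [tensorAct, Finset.mul_sum]
      refine Finset.sum_congr rfl fun y' _ => ?_
      rw [Fin.prod_univ_succ]
      simp [Fin.cons_zero, Fin.cons_succ]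
      ring
    calc ∑ x : Fin (r + 1) → Fin D, (tensorAct D (r + 1) A g x) ^ 2
        = ∑ p : Fin D × (Fin r → Fin D), (tensorAct D (r + 1) A g (Fin.cons p.1 p.2)) ^ 2 :=
          hre _
      _ = ∑ x' : Fin r → Fin D, ∑ a : Fin D, (A.mulVec (fun b => g1 b x') a) ^ 2 := by
          rw [Fintype.sum_prod_type, Finset.sum_comm]
          refine Finset.sum_congr rfl fun x' _ => Finset.sum_congr rfl fun a _ => ?_
          rw [key a x']
          rfl
      _ ≤ ∑ x' : Fin r → Fin D, ∑ b : Fin D, (g1 b x') ^ 2 :=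
          Finset.sum_le_sum fun x' _ => hA _
      _ = ∑ b : Fin D, ∑ x' : Fin r → Fin D, (g1 b x') ^ 2 := Finset.sum_comm
      _ ≤ ∑ b : Fin D, ∑ y' : Fin r → Fin D, (g (Fin.cons b y')) ^ 2 :=
          Finset.sum_le_sum fun b _ => ih _
      _ = ∑ x : Fin (r + 1) → Fin D, (g x) ^ 2 := by
          rw [hre, Fintype.sum_prod_type]

/-- For a symmetric Markov operator `T` on `[D]` with spectral radius at most `ρ`
and `f : [D]^r → [0,1]` with mean `μ`, `⟨f, T^{⊗r} f⟩ ≥ μ² - S_ρ(f)`. -/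
theorem stmt_13 (D r : ℕ) (hD : 1 ≤ D) (hr : 1 ≤ r) (ρ : ℝ) (hρ0 : 0 < ρ) (hρ1 : ρ < 1)
    (T : Matrix (Fin D) (Fin D) ℝ) (hsymm : T.IsSymm)
    (hnonneg : ∀ i j, 0 ≤ T i j) (hrow : ∀ i, ∑ j, T i j = 1)
    (hspec : ∀ v : Fin D → ℝ, ∑ i, v i = 0 →
      Real.sqrt (∑ i, T.mulVec v i ^ 2) ≤ ρ * Real.sqrt (∑ i, v i ^ 2))
    (f : (Fin r → Fin D) → ℝ) (hf0 : ∀ x, 0 ≤ f x) (hf1 : ∀ x, f x ≤ 1)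
    (μ : ℝ) (hμ : μ = (1 / (D : ℝ) ^ r) * ∑ x : Fin r → Fin D, f x) :
    finner D r f (tensorAct D r T f) ≥ μ ^ 2 - finner D r f (tensorAct D r (BB D ρ) f) := by
  classical
  have hD0 : (0 : ℝ) < D := by exact_mod_cast hD
  have hDne : (D : ℝ) ≠ 0 := ne_of_gt hD0
  have hρne : ρ ≠ 0 := ne_of_gt hρ0
  set J : Matrix (Fin D) (Fin D) ℝ := fun _ _ => 1 / (D : ℝ) with hJdef
  set P : Matrix (Fin D) (Fin D) ℝ := T - J with hPdef
  set E : Matrix (Fin D) (Fin D) ℝ := 1 - J with hEdef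
  set a : ℝ := Real.sqrt ρ with hadef
  have ha2 : a * a = ρ := Real.mul_self_sqrt hρ0.le
  set Sq : Matrix (Fin D) (Fin D) ℝ := J + a • E with hSqdef
  set Q : Matrix (Fin D) (Fin D) ℝ := J + ρ⁻¹ • P with hQdef
  clear_value Q Sq a E P J
  -- column sums of T
  have hcol : ∀ j, ∑ i, T i j = 1 := by
    intro j
    calc ∑ i, T i j = ∑ i, T j i := Finset.sum_congr rfl fun i _ => (hsymm.apply j i).symm ▸ rfl
      _ = 1 := hrow j
  have hJJ : J * J = J := by
    ext i j
    simp only [Matrix.mul_apply]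
    simp only [hJdef, Finset.sum_const, Finset.card_univ, Fintype.card_fin,
      nsmul_eq_mul]
    field_simp
  have hProw : ∀ i, ∑ k, P i k = 0 := by
    intro i
    simp only [hPdef, Matrix.sub_apply, Finset.sum_sub_distrib, hrow i]
    simp only [hJdef, Finset.sum_const, Finset.card_univ, Fintype.card_fin, nsmul_eq_mul]
    field_simp
    simp
  have hPcol : ∀ j, ∑ i, P i j = 0 := by
    intro j
    simp only [hPdef, Matrix.sub_apply, Finset.sum_sub_distrib, hcol j]
    simp only [hJdef, Finset.sum_const, Finset.card_univ, Fintype.card_fin, nsmul_eq_mul]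
    field_simp
    simp
  have hJP : J * P = 0 := by
    ext i j
    simp only [Matrix.mul_apply, Matrix.zero_apply]
    simp only [hJdef]
    rw [← Finset.mul_sum, hPcol j, mul_zero]
  have hPJ : P * J = 0 := by
    ext i j
    simp only [Matrix.mul_apply, Matrix.zero_apply]
    simp only [hJdef]
    rw [← Finset.sum_mul, hProw i, zero_mul]
  have hJE : J * E = 0 := by
    rw [hEdef, Matrix.mul_sub, Matrix.mul_one, hJJ, sub_self]
  have hEJ : E * J = 0 := by
    rw [hEdef, Matrix.sub_mul, Matrix.one_mul, hJJ, sub_self]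
  have hEE : E * E = E := by
    nth_rewrite 2 [hEdef]
    rw [Matrix.mul_sub, Matrix.mul_one, show E * J = 0 from hEJ, sub_zero]
  have hEP : E * P = P := by
    rw [hEdef, Matrix.sub_mul, Matrix.one_mul, hJP, sub_zero]
  have hPE : P * E = P := by
    rw [hEdef, Matrix.mul_sub, Matrix.mul_one, hPJ, sub_zero]
  have hBB : BB D ρ = J + ρ • E := by
    ext i j
    by_cases h : i = j
    · simp only [BB, h, if_true, hEdef, Matrix.add_apply, Matrix.smul_apply,
        Matrix.sub_apply, Matrix.one_apply_eq, smul_eq_mul]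
      simp only [hJdef]
      ring
    · simp only [BB, h, if_false, hEdef, Matrix.add_apply, Matrix.smul_apply,
        Matrix.sub_apply, Matrix.one_apply_ne h, smul_eq_mul]
      simp only [hJdef]
      ring
  have hSqSq : Sq * Sq = BB D ρ := by
    rw [hBB, hSqdef, Matrix.add_mul, Matrix.mul_add, Matrix.mul_add, Matrix.mul_smul,
      Matrix.smul_mul, Matrix.smul_mul, Matrix.mul_smul, hJJ, hJE, hEJ, hEE]
    simp [smul_smul, ha2]
  have hQSq : Q * Sq = J + (ρ⁻¹ * a) • P := by
    rw [hQdef, hSqdef, Matrix.add_mul, Matrix.mul_add, Matrix.mul_add, Matrix.mul_smul,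
      Matrix.smul_mul, Matrix.smul_mul, Matrix.mul_smul, hJJ, hJE, hPJ, hPE]
    simp [smul_smul]
  have hT : Sq * (Q * Sq) = T := by
    rw [hQSq, hSqdef, Matrix.add_mul, Matrix.mul_add, Matrix.mul_add, Matrix.mul_smul,
      Matrix.smul_mul, Matrix.smul_mul, Matrix.mul_smul, hJJ, hJP, hEJ, hEP]
    have haa : a • (ρ⁻¹ * a) • P = P := by
      rw [smul_smul, show a * (ρ⁻¹ * a) = 1 from by
        rw [mul_comm ρ⁻¹ a, ← mul_assoc, ha2, mul_inv_cancel₀ hρne], one_smul]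
    rw [hPdef] at haa ⊢
    simp [haa]
  have hJSq : J * Sq = J := by
    rw [hSqdef, Matrix.mul_add, Matrix.mul_smul, hJJ, hJE, smul_zero, add_zero]
  have hSqJ : Sq * J = J := by
    rw [hSqdef, Matrix.add_mul, Matrix.smul_mul, hJJ, hEJ, smul_zero, add_zero]
  have hJ3 : Sq * (J * Sq) = J := by rw [hJSq, hSqJ]
  have hQJ : Q * J = J := by
    rw [hQdef, Matrix.add_mul, Matrix.smul_mul, hJJ, hPJ, smul_zero, add_zero]
  have hJsymm : J.IsSymm := by
    unfold Matrix.IsSymm; ext i j; rw [Matrix.transpose_apply]; simp [hJdef]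
  have hSqsymm : Sq.IsSymm := by
    unfold Matrix.IsSymm
    rw [hSqdef, Matrix.transpose_add, Matrix.transpose_smul, hEdef, Matrix.transpose_sub,
      Matrix.transpose_one, hJsymm]
  -- contraction property of Q
  have hQc : ∀ v : Fin D → ℝ, ∑ i, (Q.mulVec v i) ^ 2 ≤ ∑ i, (v i) ^ 2 := by
    intro v
    set m : ℝ := (∑ i, v i) / D with hmdef
    set w : Fin D → ℝ := fun i => v i - m with hwdef
    clear_value w m
    have hw0 : ∑ i, w i = 0 := by
      simp only [hwdef, Finset.sum_sub_distrib, Finset.sum_const, Finset.card_univ,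
        Fintype.card_fin, nsmul_eq_mul, hmdef]
      field_simp
      simp
    have hJv : ∀ i, J.mulVec v i = m := by
      intro i
      simp only [Matrix.mulVec, dotProduct, hJdef, hmdef]
      rw [← Finset.mul_sum]
      field_simp
    have hTv : ∀ i, T.mulVec v i = T.mulVec w i + m := by
      intro i
      simp only [Matrix.mulVec, dotProduct, hwdef]
      rw [show ∑ j, T i j * (v j - m) = ∑ j, T i j * v j - (∑ j, T i j) * m from by
        rw [Finset.sum_mul, ← Finset.sum_sub_distrib]; exact Finset.sum_congr rfl
          fun j _ => by ring, hrow i]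
      ring
    have hQv : ∀ i, Q.mulVec v i = m + ρ⁻¹ * T.mulVec w i := by
      intro i
      rw [hQdef, Matrix.add_mulVec, Matrix.smul_mulVec]
      simp only [Pi.add_apply, Pi.smul_apply, smul_eq_mul, hJv i]
      congr 1
      rw [hPdef, Matrix.sub_mulVec]
      simp only [Pi.sub_apply, hJv i, hTv i]
      ring
    have hTw0 : ∑ i, T.mulVec w i = 0 := by
      simp only [Matrix.mulVec, dotProduct]
      rw [Finset.sum_comm]
      calc ∑ j, ∑ i, T i j * w j = ∑ j, (∑ i, T i j) * w j := by
            exact Finset.sum_congr rfl fun j _ => (Finset.sum_mul _ _ _).symm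
        _ = ∑ j, w j := Finset.sum_congr rfl fun j _ => by rw [hcol j, one_mul]
        _ = 0 := hw0
    have hTw : ∑ i, (T.mulVec w i) ^ 2 ≤ ρ ^ 2 * ∑ i, (w i) ^ 2 := by
      have h1 := hspec w hw0
      have h2 : 0 ≤ ∑ i, (T.mulVec w i) ^ 2 := Finset.sum_nonneg fun i _ => sq_nonneg _
      have h3 : 0 ≤ ∑ i, (w i) ^ 2 := Finset.sum_nonneg fun i _ => sq_nonneg _
      have h4 := Real.sq_sqrt h2
      have h5 := Real.sq_sqrt h3
      have h6 := Real.sqrt_nonneg (∑ i, (T.mulVec w i) ^ 2)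
      have h7 := Real.sqrt_nonneg (∑ i, (w i) ^ 2)
      nlinarith [h1, h4, h5, h6, h7, hρ0]
    have expand1 : ∑ i, (Q.mulVec v i) ^ 2
        = (D : ℝ) * m ^ 2 + 2 * m * ρ⁻¹ * (∑ i, T.mulVec w i)
          + ρ⁻¹ ^ 2 * ∑ i, (T.mulVec w i) ^ 2 := by
      calc ∑ i, (Q.mulVec v i) ^ 2
          = ∑ i, (m ^ 2 + 2 * m * ρ⁻¹ * T.mulVec w i + ρ⁻¹ ^ 2 * (T.mulVec w i) ^ 2) :=
            Finset.sum_congr rfl fun i _ => by rw [hQv i]; ring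
        _ = _ := by
            rw [Finset.sum_add_distrib, Finset.sum_add_distrib, Finset.sum_const,
              ← Finset.mul_sum, ← Finset.mul_sum]
            simp [Finset.card_univ, nsmul_eq_mul]
    have expand2 : ∑ i, (v i) ^ 2 = (D : ℝ) * m ^ 2 + ∑ i, (w i) ^ 2 := by
      calc ∑ i, (v i) ^ 2 = ∑ i, (m ^ 2 + 2 * m * w i + (w i) ^ 2) :=
            Finset.sum_congr rfl fun i _ => by
              rw [show v i = w i + m from by rw [hwdef]; ring]; ring
        _ = (D : ℝ) * m ^ 2 + 2 * m * (∑ i, w i) + ∑ i, (w i) ^ 2 := by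
            rw [Finset.sum_add_distrib, Finset.sum_add_distrib, Finset.sum_const,
              ← Finset.mul_sum]
            simp [Finset.card_univ, nsmul_eq_mul]
        _ = _ := by rw [hw0]; ring
    have hkey : ρ⁻¹ ^ 2 * ∑ i, (T.mulVec w i) ^ 2 ≤ ∑ i, (w i) ^ 2 := by
      have := mul_le_mul_of_nonneg_left hTw (le_of_lt (by positivity : (0:ℝ) < ρ⁻¹ ^ 2))
      calc ρ⁻¹ ^ 2 * ∑ i, (T.mulVec w i) ^ 2 ≤ ρ⁻¹ ^ 2 * (ρ ^ 2 * ∑ i, (w i) ^ 2) := this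
        _ = ∑ i, (w i) ^ 2 := by field_simp
    rw [expand1, expand2, hTw0]
    linarith
  -- main assembly
  set g : (Fin r → Fin D) → ℝ := tensorAct D r Sq f with hgdef
  clear_value g
  have hTpart : ∑ x : Fin r → Fin D, f x * tensorAct D r T f x
      = ∑ x : Fin r → Fin D, g x * tensorAct D r Q g x := by
    rw [hgdef, ← hT, ← tensorAct_comp, ← tensorAct_comp, dot_tensorAct D r Sq hSqsymm]
  have hJpart : ∑ x : Fin r → Fin D, f x * tensorAct D r J f x
      = ∑ x : Fin r → Fin D, g x * tensorAct D r J g x := by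
    rw [hgdef]
    conv_lhs => rw [← hJ3]
    rw [← tensorAct_comp, ← tensorAct_comp, dot_tensorAct D r Sq hSqsymm]
  have hBpart : ∑ x : Fin r → Fin D, f x * tensorAct D r (BB D ρ) f x
      = ∑ x : Fin r → Fin D, g x * g x := by
    rw [hgdef, ← hSqSq, ← tensorAct_comp, dot_tensorAct D r Sq hSqsymm]
  set w : (Fin r → Fin D) → ℝ := fun x => g x - tensorAct D r J g x with hwdef
  clear_value w
  have hu : tensorAct D r Q w = fun x => tensorAct D r Q g x - tensorAct D r J g x := by
    rw [hwdef, tensorAct_sub]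
    funext x
    rw [tensorAct_comp, hQJ]
  have hJJg : tensorAct D r J (tensorAct D r J g) = tensorAct D r J g := by
    rw [tensorAct_comp, hJJ]
  have hmove : ∑ x : Fin r → Fin D, g x * tensorAct D r J g x
      = ∑ x : Fin r → Fin D, (tensorAct D r J g x) * (tensorAct D r J g x) := by
    conv_lhs => rw [← hJJg]
    rw [dot_tensorAct D r J hJsymm]
  have hw2 : ∑ x : Fin r → Fin D, (w x) ^ 2 ≤ ∑ x : Fin r → Fin D, (g x) ^ 2 := by
    have hexp : ∑ x : Fin r → Fin D, (w x) ^ 2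
        = ∑ x : Fin r → Fin D, (g x) ^ 2 - 2 * ∑ x, g x * tensorAct D r J g x
          + ∑ x, (tensorAct D r J g x) * (tensorAct D r J g x) := by
      rw [show ∑ x : Fin r → Fin D, (w x) ^ 2
          = ∑ x : Fin r → Fin D, ((g x) ^ 2 - 2 * (g x * tensorAct D r J g x)
            + (tensorAct D r J g x) * (tensorAct D r J g x)) from
        Finset.sum_congr rfl fun x _ => by rw [hwdef]; ring]
      rw [Finset.sum_add_distrib, Finset.sum_sub_distrib, ← Finset.mul_sum]
    have hnn : 0 ≤ ∑ x : Fin r → Fin D, g x * tensorAct D r J g x := by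
      rw [hmove]
      exact Finset.sum_nonneg fun x _ => mul_self_nonneg _
    rw [hexp, ← hmove]
    linarith
  have hu2 : ∑ x : Fin r → Fin D, (tensorAct D r Q g x - tensorAct D r J g x) ^ 2
      ≤ ∑ x : Fin r → Fin D, (g x) ^ 2 := by
    have h1 := tensor_contract D Q hQc r w
    rw [hu] at h1
    exact le_trans h1 hw2
  have hgnn : 0 ≤ ∑ x : Fin r → Fin D, (g x) ^ 2 :=
    Finset.sum_nonneg fun x _ => sq_nonneg _
  have hcs := Finset.sum_mul_sq_le_sq_mul_sq Finset.univ g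
    (fun x => tensorAct D r Q g x - tensorAct D r J g x)
  have hlow : ∑ x : Fin r → Fin D, g x * (tensorAct D r Q g x - tensorAct D r J g x)
      ≥ -∑ x : Fin r → Fin D, (g x) ^ 2 := by
    nlinarith [hcs, hu2, hgnn,
      mul_le_mul_of_nonneg_left hu2 hgnn]
  have hbig : ∑ x : Fin r → Fin D, f x * tensorAct D r T f x
      - ∑ x : Fin r → Fin D, f x * tensorAct D r J f x
      + ∑ x : Fin r → Fin D, f x * tensorAct D r (BB D ρ) f x ≥ 0 := by
    rw [hTpart, hJpart, hBpart]
    have h1 : ∑ x : Fin r → Fin D, g x * tensorAct D r Q g x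
        - ∑ x : Fin r → Fin D, g x * tensorAct D r J g x
        = ∑ x : Fin r → Fin D, g x * (tensorAct D r Q g x - tensorAct D r J g x) := by
      rw [← Finset.sum_sub_distrib]
      exact Finset.sum_congr rfl fun x _ => by ring
    have h2 : ∑ x : Fin r → Fin D, g x * g x = ∑ x : Fin r → Fin D, (g x) ^ 2 :=
      Finset.sum_congr rfl fun x _ => (sq (g x)).symm ▸ by ring
    rw [h1, h2]
    linarith
  have hJbig : finner D r f (tensorAct D r J f) = μ ^ 2 := by
    have h1 : ∀ x, tensorAct D r J f x = (1 / (D : ℝ)) ^ r * ∑ y, f y := by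
      intro x
      rw [tensorAct]
      have hc : ∀ y : Fin r → Fin D, (∏ i, J (x i) (y i)) * f y
          = (1 / (D : ℝ)) ^ r * f y := by
        intro y
        rw [show (∏ i, J (x i) (y i)) = (1 / (D:ℝ)) ^ r from by
          simp [hJdef, Finset.prod_const, Finset.card_univ]]
      rw [Finset.sum_congr rfl fun y _ => hc y, ← Finset.mul_sum]
    rw [finner, Finset.sum_congr rfl fun x _ => by rw [h1 x], ← Finset.sum_mul, hμ,
      div_pow, one_pow]
    ring
  have hc0 : (0:ℝ) ≤ 1 / (D : ℝ) ^ r := by positivity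
  have hfin : finner D r f (tensorAct D r T f) - μ ^ 2
      + finner D r f (tensorAct D r (BB D ρ) f) ≥ 0 := by
    have h := mul_nonneg hc0 (by linarith [hbig] :
      (0:ℝ) ≤ (∑ x : Fin r → Fin D, f x * tensorAct D r T f x)
        - (∑ x : Fin r → Fin D, f x * tensorAct D r J f x)
        + (∑ x : Fin r → Fin D, f x * tensorAct D r (BB D ρ) f x))
    have h2 : (1 / (D:ℝ) ^ r) * ((∑ x : Fin r → Fin D, f x * tensorAct D r T f x)
        - (∑ x : Fin r → Fin D, f x * tensorAct D r J f x)
        + (∑ x : Fin r → Fin D, f x * tensorAct D r (BB D ρ) f x))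
        = finner D r f (tensorAct D r T f) - finner D r f (tensorAct D r J f)
          + finner D r f (tensorAct D r (BB D ρ) f) := by
      simp only [finner]; ring
    rw [h2] at h
    rw [← hJbig]
    linarith
  linarith
end
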